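/- arXiv:1807.02823 — 10 statements merged into one kernel-verified Lean document; each statement's English description precedes it below -/
import Mathlib

section
/- Let g ≥ 1 and let f ∈ ℤ[X] be a monic polynomial of odd degree 2g+1. For every field K, writing f̄ ∈ K[X] for the image of f under the canonical map ℤ[X] → K[X], the ring K[X,Y]/(Y² − f̄) is an integral domain. (In particular all fibers of the Weierstrass model y² = f(x) over Spec ℤ are geometrically integral curves.) -/
open Polynomial

noncomputable section

/-- If `f ∈ ℤ[X]` is monic of odd degree `2g+1`, `g ≥ 1`, then for every
field `K` the ring `K[X,Y]/(Y² - f̄)` is an integral domain, where `f̄` is the image of `f`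
in `K[X]`. -/
theorem fibers_are_integral (g : ℕ) (hg : 1 ≤ g) (f : ℤ[X]) (hmonic : f.Monic)
    (hdeg : f.natDegree = 2 * g + 1) (K : Type) [Field K] :
    IsDomain (AdjoinRoot ((X : (K[X])[X]) ^ 2 - C (f.map (Int.castRingHom K)))) := by
  set fb : K[X] := f.map (Int.castRingHom K) with hfb
  have hfbm : fb.Monic := hmonic.map _
  have hfbd : fb.natDegree = 2 * g + 1 := by
    rw [hfb, hmonic.natDegree_map, hdeg]
  have hmon : ((X : (K[X])[X]) ^ 2 - C fb).Monic := monic_X_pow_sub_C fb two_ne_zero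
  have hirr : Irreducible ((X : (K[X])[X]) ^ 2 - C fb) := by
    rw [hmon.irreducible_iff_irreducible_map_fraction_map (K := FractionRing K[X])]
    rw [Polynomial.map_sub, Polynomial.map_pow, map_X, map_C]
    rw [X_pow_sub_C_irreducible_iff_of_prime Nat.prime_two]
    intro b hb
    have hbint : IsIntegral K[X] b := by
      refine IsIntegral.of_pow (n := 2) two_pos ?_
      rw [hb]; exact isIntegral_algebraMap
    obtain ⟨q, hq⟩ := IsIntegrallyClosed.isIntegral_iff.mp hbint
    rw [← hq, ← map_pow] at hb
    have hq2 : q ^ 2 = fb := IsFractionRing.injective K[X] (FractionRing K[X]) hb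
    have hq0 : q ≠ 0 := by
      rintro rfl
      simp at hq2
      exact hfbm.ne_zero hq2.symm
    have := congrArg natDegree hq2
    rw [natDegree_pow, hfbd] at this
    omega
  have hprime : Prime ((X : (K[X])[X]) ^ 2 - C fb) := hirr.prime
  have : (Ideal.span {(X : (K[X])[X]) ^ 2 - C fb}).IsPrime :=
    (Ideal.span_singleton_prime hprime.ne_zero).mpr hprime
  exact Ideal.Quotient.isDomain _
end
end

section
/- Let g ≥ 1 and let f ∈ ℤ[X] be a square-free monic polynomial of degree 2g+1. Then the ring R = ℤ[X,Y]/(Y² − f) is an integrally closed integral domain (i.e. the affine Weierstrass model W : y² = f(x) over Spec ℤ is normal); in particular R is regular in codimension 1. -/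
open Polynomial

noncomputable section

/-- A monic integer polynomial that is squarefree over `ℚ` is squarefree over `ℤ`. -/
lemma weierstrass_aux_sf_int (f : ℤ[X]) (hmonic : f.Monic)
    (hsf : Squarefree (f.map (Int.castRingHom ℚ))) : Squarefree f := by
  intro a ha
  have hmap : (a.map (Int.castRingHom ℚ)) * (a.map (Int.castRingHom ℚ)) ∣
      f.map (Int.castRingHom ℚ) := by
    rw [← Polynomial.map_mul]; exact Polynomial.map_dvd _ ha
  have hu : IsUnit (a.map (Int.castRingHom ℚ)) := hsf _ hmap
  have hinj : Function.Injective (Int.castRingHom ℚ) := Int.cast_injective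
  have hdeg0 : a.natDegree = 0 := by
    have h1 := natDegree_eq_zero_of_isUnit hu
    rwa [natDegree_map_eq_of_injective hinj] at h1
  obtain ⟨n, rfl⟩ := natDegree_eq_zero.mp hdeg0
  have hC : C (n * n) ∣ f := by rwa [map_mul]
  have hdvd : n * n ∣ f.coeff f.natDegree := (C_dvd_iff_dvd_coeff _ _).mp hC f.natDegree
  rw [hmonic.coeff_natDegree] at hdvd
  exact isUnit_C.mpr (isUnit_of_dvd_one ((dvd_mul_right n n).trans hdvd))

set_option maxHeartbeats 1000000 in
set_option synthInstance.maxHeartbeats 200000 in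
/-- If `f ∈ ℤ[X]` is a square-free monic polynomial of degree `2g+1`,
`g ≥ 1`, then `R = ℤ[X,Y]/(Y² - f)` is an integrally closed integral domain, i.e. the
affine Weierstrass model `W : y² = f(x)` over `Spec ℤ` is normal. -/
theorem weierstrass_model_normal (g : ℕ) (hg : 1 ≤ g) (f : ℤ[X]) (hmonic : f.Monic)
    (hdeg : f.natDegree = 2 * g + 1)
    (hsf : Squarefree (f.map (Int.castRingHom ℚ))) :
    IsDomain (AdjoinRoot ((X : (ℤ[X])[X]) ^ 2 - C f)) ∧
      IsIntegrallyClosed (AdjoinRoot ((X : (ℤ[X])[X]) ^ 2 - C f)) := by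
  classical
  -- notation
  set p : (ℤ[X])[X] := (X : (ℤ[X])[X]) ^ 2 - C f with hp_def
  let Q := FractionRing ℤ[X]
  let φ : ℤ[X] →+* Q := algebraMap ℤ[X] Q
  have hφinj : Function.Injective φ := IsFractionRing.injective ℤ[X] Q
  set fQ : Q := φ f with hfQ_def
  set q : Q[X] := (X : Q[X]) ^ 2 - C fQ with hq_def
  have hpq : p.map φ = q := by
    simp [hp_def, hq_def, Polynomial.map_sub, Polynomial.map_pow, hfQ_def]
  have hpmonic : p.Monic := monic_X_pow_sub_C f two_ne_zero
  -- f is not a square in Q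
  have hnotsq : ∀ b : Q, b ^ 2 ≠ fQ := by
    intro b hb
    have hbint : IsIntegral ℤ[X] b := by
      refine ⟨(X : (ℤ[X])[X]) ^ 2 - C f, hpmonic, ?_⟩
      simp [eval₂_sub, eval₂_pow, hb, hfQ_def, φ]
    obtain ⟨r, hr⟩ := IsIntegrallyClosed.isIntegral_iff.mp hbint
    have : φ (r ^ 2) = φ f := by rw [map_pow, hr, hb]
    have hr2 : r ^ 2 = f := hφinj this
    have : (r ^ 2).natDegree = 2 * g + 1 := by rw [hr2, hdeg]
    rw [natDegree_pow] at this
    omega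
  -- q is irreducible; p is irreducible, hence prime
  have hq_irr : Irreducible q := X_pow_sub_C_irreducible_of_prime Nat.prime_two hnotsq
  have hp_irr : Irreducible p :=
    hpmonic.irreducible_of_irreducible_map φ p (hpq ▸ hq_irr)
  have hp_prime : Prime p := hp_irr.prime
  have hdom : IsDomain (AdjoinRoot p) := AdjoinRoot.isDomain_of_prime hp_prime
  refine ⟨hdom, ?_⟩
  -- the field L = Q[X]/(q)
  haveI : Fact (Irreducible q) := ⟨hq_irr⟩
  let L := AdjoinRoot q
  have hroot2 : (AdjoinRoot.root q) ^ 2 = algebraMap Q L fQ := by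
    have h0 := AdjoinRoot.eval₂_root q
    simp only [hq_def, eval₂_sub, eval₂_pow, eval₂_X, eval₂_C] at h0
    have : (AdjoinRoot.of q) fQ = algebraMap Q L fQ := rfl
    rw [← this]
    linear_combination h0
  -- algebra structure
  letI : Algebra ℤ[X] L := ((algebraMap Q L).comp φ).toAlgebra
  haveI : @IsScalarTower ℤ[X] Q L Algebra.toSMul Algebra.toSMul Algebra.toSMul :=
    IsScalarTower.of_algebraMap_eq fun x => rfl
  have hψ0 : p.eval₂ (algebraMap ℤ[X] L) (AdjoinRoot.root q) = 0 := by
    have : (algebraMap ℤ[X] L) = (algebraMap Q L).comp φ := rfl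
    rw [this, ← eval₂_map, hpq]
    simpa [hq_def, eval₂_sub, eval₂_pow] using sub_eq_zero.mpr hroot2
  let ψ : AdjoinRoot p →+* L := AdjoinRoot.lift (algebraMap ℤ[X] L) (AdjoinRoot.root q) hψ0
  have hψmk : ∀ r : (ℤ[X])[X], ψ (AdjoinRoot.mk p r) = AdjoinRoot.mk q (r.map φ) := by
    intro r
    rw [show ψ (AdjoinRoot.mk p r) = eval₂ (algebraMap ℤ[X] L) (AdjoinRoot.root q) r from
      AdjoinRoot.lift_mk _ r]
    have : (algebraMap ℤ[X] L) = (algebraMap Q L).comp φ := rfl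
    rw [this, ← eval₂_map, ← AdjoinRoot.aeval_eq]
    rfl
  have hψinj : Function.Injective ψ := by
    rw [injective_iff_map_eq_zero]
    intro s hs
    obtain ⟨r, rfl⟩ := AdjoinRoot.mk_surjective s
    rw [hψmk] at hs
    rw [AdjoinRoot.mk_eq_zero] at hs ⊢
    rw [← hpq] at hs
    exact (map_dvd_map φ hφinj hpmonic).mp hs
  letI : Algebra (AdjoinRoot p) L := ψ.toAlgebra
  have halg : algebraMap (AdjoinRoot p) L = ψ := rfl
  haveI : @IsScalarTower ℤ[X] (AdjoinRoot p) L Algebra.toSMul Algebra.toSMul Algebra.toSMul :=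
    IsScalarTower.of_algebraMap_eq fun x => by
      rw [halg]
      exact (AdjoinRoot.lift_of hψ0).symm
  haveI : Module.Finite ℤ[X] (AdjoinRoot p) :=
    Module.Finite.of_basis (AdjoinRoot.powerBasis' hpmonic).basis
  haveI : Algebra.IsIntegral ℤ[X] (AdjoinRoot p) := Algebra.IsIntegral.of_finite _ _
  haveI : FiniteDimensional Q L :=
    Module.Finite.of_basis (AdjoinRoot.powerBasis hq_irr.ne_zero).basis
  -- the conjugation σ
  have hσ0 : aeval (-AdjoinRoot.root q) q = 0 := by
    simp only [hq_def, map_sub, map_pow, aeval_X, aeval_C]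
    rw [neg_pow, hroot2]
    simp only [L, AdjoinRoot.algebraMap_eq, sub_self, even_two, Even.neg_one_pow, one_mul]
  let σ : L →ₐ[Q] L := AdjoinRoot.liftAlgHom q (Algebra.ofId Q L) (-AdjoinRoot.root q) hσ0
  have hσroot : σ (AdjoinRoot.root q) = -AdjoinRoot.root q :=
    AdjoinRoot.liftAlgHom_root q (Algebra.ofId Q L) (-AdjoinRoot.root q) hσ0
  -- squarefreeness over ℤ
  have hsfZ : Squarefree f := weierstrass_aux_sf_int f hmonic hsf
  -- key: S is the integral closure of ℤ[X] in L
  haveI hic : IsIntegralClosure (AdjoinRoot p) ℤ[X] L := by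
    refine ⟨hψinj, fun {x} => ⟨?_, ?_⟩⟩
    · intro hx
      -- write x = c₀ + c₁ * root q
      obtain ⟨r0, hr0⟩ := AdjoinRoot.mk_surjective x
      have hqmonic : q.Monic := monic_X_pow_sub_C fQ two_ne_zero
      set r : Q[X] := r0 %ₘ q with hr_def
      have hxr : x = AdjoinRoot.mk q r := by
        rw [← hr0]
        rw [AdjoinRoot.mk_eq_mk, hr_def, modByMonic_eq_sub_mul_div r0 q]
        exact ⟨r0 /ₘ q, by ring⟩
      have hrdeg : r.degree ≤ 1 := by
        have h2 := degree_modByMonic_lt r0 hqmonic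
        rw [hq_def, degree_X_pow_sub_C (by norm_num) fQ] at h2
        exact Order.lt_succ_iff.mp (by exact_mod_cast h2)
      set c₀ : Q := r.coeff 0 with hc0_def
      set c₁ : Q := r.coeff 1 with hc1_def
      have hxeq : x = algebraMap Q L c₁ * AdjoinRoot.root q + algebraMap Q L c₀ := by
        rw [hxr]
        conv_lhs => rw [eq_X_add_C_of_degree_le_one hrdeg]
        rw [map_add, map_mul]
        rfl
      -- conjugate
      have hσx : σ x = algebraMap Q L c₁ * (-AdjoinRoot.root q) + algebraMap Q L c₀ := by
        rw [hxeq, map_add, map_mul, hσroot, AlgHom.commutes, AlgHom.commutes]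
      have hσint : IsIntegral ℤ[X] (σ x) := hx.map σ
      have hQLinj : Function.Injective (algebraMap Q L) := (algebraMap Q L).injective
      -- trace and norm
      have htr : x + σ x = algebraMap Q L (2 * c₀) := by
        rw [hσx, hxeq, map_mul, map_ofNat]; ring
      have hnm : x * σ x = algebraMap Q L (c₀ ^ 2 - c₁ ^ 2 * fQ) := by
        rw [hσx, hxeq, map_sub, map_mul, map_pow, map_pow]
        linear_combination (-(algebraMap Q L c₁) ^ 2) * hroot2
      have htrI : IsIntegral ℤ[X] ((2 : Q) * c₀) :=
        (isIntegral_algebraMap_iff hQLinj).mp (htr ▸ hx.add hσint)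
      have hnmI : IsIntegral ℤ[X] (c₀ ^ 2 - c₁ ^ 2 * fQ) :=
        (isIntegral_algebraMap_iff hQLinj).mp (hnm ▸ hx.mul hσint)
      obtain ⟨T, hT⟩ := IsIntegrallyClosed.isIntegral_iff.mp htrI
      obtain ⟨N, hN⟩ := IsIntegrallyClosed.isIntegral_iff.mp hnmI
      -- discriminant relation : (2c₁)² ⬝ fQ = φ (T² - 4N)
      have hdisc : (2 * c₁) ^ 2 * fQ = φ (T ^ 2 - 4 * N) := by
        rw [map_sub, map_pow, hT, map_mul, map_ofNat, hN]
        ring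
      -- 2c₁ * fQ is integral
      have hwint : IsIntegral ℤ[X] (2 * c₁ * fQ) := by
        refine ⟨(X : (ℤ[X])[X]) ^ 2 - C ((T ^ 2 - 4 * N) * f), monic_X_pow_sub_C _ two_ne_zero, ?_⟩
        simp only [eval₂_sub, eval₂_pow, eval₂_X, eval₂_C]
        rw [sub_eq_zero, map_mul]
        linear_combination fQ * hdisc
      obtain ⟨W, hW⟩ := IsIntegrallyClosed.isIntegral_iff.mp hwint
      have hW2 : W ^ 2 = (T ^ 2 - 4 * N) * f := by
        apply hφinj
        rw [map_pow, hW, map_mul]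
        linear_combination fQ * hdisc
      have hfW : f ∣ W := (hsfZ.dvd_pow_iff_dvd two_ne_zero).mp ⟨T ^ 2 - 4 * N, by
        rw [hW2]; ring⟩
      obtain ⟨B, hB⟩ := hfW
      have hfQ0 : fQ ≠ 0 := fun h =>
        hmonic.ne_zero (hφinj (by rw [map_zero, ← hfQ_def]; exact h))
      have hBeq : φ B = 2 * c₁ := by
        have h2 : φ f * φ B = 2 * c₁ * fQ := by rw [← map_mul, ← hB]; exact hW
        have h1 : fQ * φ B = fQ * (2 * c₁) := by rw [hfQ_def]; linear_combination h2
        exact mul_left_cancel₀ hfQ0 h1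
      -- the relation T² - B² f = 4 N in ℤ[X]
      have hrel : T ^ 2 - B ^ 2 * f = 4 * N := by
        apply hφinj
        simp only [map_sub, map_mul, map_pow, map_ofNat]
        rw [hT, hBeq, hN]
        ring
      -- reduce mod 2
      let π : ℤ[X] →+* (ZMod 2)[X] := mapRingHom (Int.castRingHom (ZMod 2))
      have h2zero : (2 : (ZMod 2)[X]) = 0 := by
        rw [← map_ofNat (C : ZMod 2 →+* (ZMod 2)[X]) 2,
          show (2 : ZMod 2) = 0 by decide, map_zero]
      have hmod : π T ^ 2 = π B ^ 2 * π f := by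
        have h := congrArg π hrel
        simp only [map_sub, map_mul, map_pow] at h
        rw [show (4 : ℤ[X]) = 2 * 2 by norm_num, map_mul,
          map_ofNat π 2, h2zero] at h
        linear_combination h
      have hfbar_monic : (Polynomial.map (Int.castRingHom (ZMod 2)) f).Monic :=
        hmonic.map _
      have hfbar : π f = Polynomial.map (Int.castRingHom (ZMod 2)) f := rfl
      have hfbar_deg : (π f).natDegree = 2 * g + 1 := by
        rw [hfbar, hmonic.natDegree_map, hdeg]
      have hB0 : π B = 0 := by
        by_contra hB0
        have hT0 : π T ≠ 0 := by
          intro h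
          rw [h] at hmod
          have := mul_ne_zero (pow_ne_zero 2 hB0) (hfbar ▸ hfbar_monic.ne_zero)
          simp only [ne_eq] at this
          exact this (by rw [← hmod]; ring)
        have hdeg2 : (π T ^ 2).natDegree = (π B ^ 2 * π f).natDegree := by rw [hmod]
        rw [natDegree_pow, natDegree_mul (pow_ne_zero 2 hB0)
          (hfbar ▸ hfbar_monic.ne_zero), natDegree_pow, hfbar_deg] at hdeg2
        omega
      have hT0 : π T = 0 := by
        rw [hB0] at hmod
        have : π T ^ 2 = 0 := by rw [hmod]; ring
        exact pow_eq_zero_iff two_ne_zero |>.mp this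
      -- divisibility by 2 in ℤ[X]
      have hdvd2 : ∀ P : ℤ[X], π P = 0 → ∃ P₁ : ℤ[X], P = 2 * P₁ := by
        intro P hP
        have hC2 : (C (2 : ℤ)) ∣ P := by
          refine (C_dvd_iff_dvd_coeff _ _).mpr fun i => ?_
          have hco : ((P.coeff i : ℤ) : ZMod 2) = 0 := by
            have := congrArg (fun s => Polynomial.coeff s i) hP
            simpa [π, coeff_map] using this
          exact_mod_cast (ZMod.intCast_zmod_eq_zero_iff_dvd _ 2).mp hco
        obtain ⟨P₁, hP₁⟩ := hC2
        exact ⟨P₁, by rw [hP₁]; norm_num⟩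
      obtain ⟨T₁, hT₁⟩ := hdvd2 T hT0
      obtain ⟨B₁, hB₁⟩ := hdvd2 B hB0
      have h2Q : (2 : Q) ≠ 0 := by
        intro h
        have h2 : φ 2 = φ 0 := by rw [map_ofNat, map_zero, h]
        exact two_ne_zero (hφinj h2)
      have hc0 : c₀ = φ T₁ := by
        refine mul_left_cancel₀ h2Q ?_
        rw [← hT, hT₁, map_mul, map_ofNat]
      have hc1 : c₁ = φ B₁ := by
        refine mul_left_cancel₀ h2Q ?_
        rw [← hBeq, hB₁, map_mul, map_ofNat]
      refine ⟨AdjoinRoot.of p B₁ * AdjoinRoot.root p + AdjoinRoot.of p T₁, ?_⟩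
      rw [halg, map_add, map_mul]
      have e1 : ψ (AdjoinRoot.root p) = AdjoinRoot.root q := AdjoinRoot.lift_root hψ0
      have e2 : ∀ a : ℤ[X], ψ (AdjoinRoot.of p a) = algebraMap Q L (φ a) :=
        fun a => AdjoinRoot.lift_of hψ0
      rw [e1, e2, e2, hxeq, hc0, hc1]
    · rintro ⟨y, rfl⟩
      exact (Algebra.IsIntegral.isIntegral (R := ℤ[X]) y).map (Algebra.ofId (AdjoinRoot p) L)
  haveI : IsFractionRing (AdjoinRoot p) L :=
    IsIntegralClosure.isFractionRing_of_finite_extension ℤ[X] Q L (AdjoinRoot p)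
  haveI := IsIntegrallyClosedIn.of_isIntegralClosure (R := ℤ[X]) (A := AdjoinRoot p) (B := L)
  exact (isIntegrallyClosed_iff_isIntegrallyClosedIn L).mpr this
end
end

section
/- Let R be a discrete valuation ring with fraction field K and perfect residue field k, and let f ∈ R[X]. Write f̃ ∈ k[X] for the reduction of f. Assume the generic fiber is normal, i.e. K[X,Y]/(Y² − f) is an integrally closed integral domain. Then: (a) if k[X,Y]/(Y² − f̃) is reduced, then R[X,Y]/(Y² − f) is an integrally closed integral domain; (b) k[X,Y]/(Y² − f̃) is not reduced if and only if 4f̃ = 0 in k[X] and −f̃ is a square in k[X]. -/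
open Polynomial

noncomputable section

lemma mon_sq_sub_C {A : Type*} [CommRing A] (a : A) :
    ((X : A[X]) ^ 2 - C a).Monic := by
  have h : (C a).degree < (2 : ℕ) := lt_of_le_of_lt degree_C_le (by norm_num)
  simpa using Polynomial.monic_X_pow_sub (n := 2) h

lemma deg_sq_sub_C {A : Type*} [CommRing A] [Nontrivial A] (a : A) :
    ((X : A[X]) ^ 2 - C a).degree = 2 := by
  simpa using Polynomial.degree_X_pow_sub_C (n := 2) (by norm_num) a

section Infra

variable {A A' : Type*} [CommRing A] [CommRing A'] (u : A →+* A') (a : A)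

/-- map between AdjoinRoots of `X^2 - C a` induced by a ring hom on coefficients -/
def adjm : AdjoinRoot ((X : A[X]) ^ 2 - C a) →+* AdjoinRoot ((X : A'[X]) ^ 2 - C (u a)) :=
  AdjoinRoot.lift ((AdjoinRoot.of _).comp u) (AdjoinRoot.root _) (by
    have h0 := AdjoinRoot.mk_self (f := (X : A'[X]) ^ 2 - C (u a))
    simp only [map_sub, map_pow, AdjoinRoot.mk_X, AdjoinRoot.mk_C] at h0
    simpa [eval₂_sub, eval₂_pow, eval₂_X, eval₂_C, RingHom.comp_apply] using h0)

lemma adjm_mk (p : A[X]) :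
    adjm u a (AdjoinRoot.mk _ p) = AdjoinRoot.mk _ (p.map u) := by
  rw [adjm, AdjoinRoot.lift_mk, ← AdjoinRoot.aeval_eq, aeval_def, ← AdjoinRoot.algebraMap_eq,
    eval₂_map]

lemma adjm_of (x : A) :
    adjm u a (AdjoinRoot.of _ x) = AdjoinRoot.of _ (u x) := by
  have h1 : (AdjoinRoot.of ((X : A[X]) ^ 2 - C a)) x = AdjoinRoot.mk _ (C x) := rfl
  have h2 : (AdjoinRoot.of ((X : A'[X]) ^ 2 - C (u a))) (u x) = AdjoinRoot.mk _ (C (u x)) := rfl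
  rw [h1, h2, adjm_mk, map_C]

lemma adjm_injective [IsDomain A] [IsDomain A'] (hu : Function.Injective u) :
    Function.Injective (adjm u a) := by
  rw [injective_iff_map_eq_zero]
  intro b hb
  obtain ⟨p, rfl⟩ := AdjoinRoot.mk_surjective b
  have hmon := mon_sq_sub_C a
  set q := p %ₘ ((X : A[X]) ^ 2 - C a) with hqdef
  have hpq : AdjoinRoot.mk _ p = AdjoinRoot.mk (((X : A[X]) ^ 2 - C a)) q := by
    rw [AdjoinRoot.mk_eq_mk]
    exact ⟨p /ₘ _, by linear_combination - modByMonic_add_div p ((X : A[X]) ^ 2 - C a)⟩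
  rw [hpq] at hb ⊢
  rw [adjm_mk, AdjoinRoot.mk_eq_zero] at hb
  have hdeg : (q.map u).degree < ((X : A'[X]) ^ 2 - C (u a)).degree := by
    calc (q.map u).degree ≤ q.degree := degree_map_le
    _ < ((X : A[X]) ^ 2 - C a).degree := degree_modByMonic_lt p hmon
    _ = 2 := deg_sq_sub_C a
    _ = ((X : A'[X]) ^ 2 - C (u a)).degree := (deg_sq_sub_C (u a)).symm
  have hq0 : q.map u = 0 := eq_zero_of_dvd_of_degree_lt hb hdeg
  have : q = 0 := Polynomial.map_injective u hu (by simpa using hq0)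
  rw [this, map_zero]

/-- clearing denominators coefficientwise -/
lemma clear_poly (t : A) (h : ∀ y : A', ∃ (n : ℕ) (r : A), u t ^ n * y = u r) (p : A'[X]) :
    ∃ (n : ℕ) (q : A[X]), C (u t) ^ n * p = q.map u := by
  induction p using Polynomial.induction_on' with
  | add p1 p2 ih1 ih2 =>
    obtain ⟨n1, q1, h1⟩ := ih1
    obtain ⟨n2, q2, h2⟩ := ih2
    refine ⟨n1 + n2, C t ^ n2 * q1 + C t ^ n1 * q2, ?_⟩
    rw [Polynomial.map_add, Polynomial.map_mul, Polynomial.map_mul, Polynomial.map_pow,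
      Polynomial.map_pow, map_C, ← h1, ← h2]
    ring
  | monomial d y =>
    obtain ⟨n, r, hr⟩ := h y
    refine ⟨n, monomial d r, ?_⟩
    rw [map_monomial, ← map_pow, C_mul_monomial, hr]

end Infra

lemma clear_base {R : Type*} [CommRing R] [IsDomain R] [IsDiscreteValuationRing R]
    {π : R} (hπ : Irreducible π) (y : FractionRing R) :
    ∃ (n : ℕ) (r : R), algebraMap R (FractionRing R) π ^ n * y = algebraMap R (FractionRing R) r := by
  obtain ⟨⟨a, s⟩, hy⟩ := IsLocalization.surj (nonZeroDivisors R) y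
  have hs0 : (s : R) ≠ 0 := nonZeroDivisors.ne_zero s.2
  obtain ⟨n, u, hsu⟩ := IsDiscreteValuationRing.eq_unit_mul_pow_irreducible hs0 hπ
  refine ⟨n, a * ↑u⁻¹, ?_⟩
  have hu : algebraMap R (FractionRing R) ↑u * algebraMap R (FractionRing R) ↑u⁻¹ = 1 := by
    rw [← map_mul, Units.mul_inv, map_one]
  have hs : algebraMap R (FractionRing R) (s : R)
      = algebraMap R (FractionRing R) ↑u * algebraMap R (FractionRing R) π ^ n := by
    rw [← map_pow, ← map_mul, ← hsu]
  simp only at hy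
  rw [map_mul]
  linear_combination (algebraMap R (FractionRing R) ↑u⁻¹) * hy
    - y * algebraMap R (FractionRing R) ↑u⁻¹ * hs
    - y * algebraMap R (FractionRing R) π ^ n * hu

lemma adj_mk_ne_zero {A : Type*} [CommRing A] [IsDomain A] {g p : A[X]}
    (hdeg : p.degree < g.degree) (hp : p ≠ 0) : AdjoinRoot.mk g p ≠ 0 := by
  intro h
  exact hp (Polynomial.eq_zero_of_dvd_of_degree_lt (AdjoinRoot.mk_eq_zero.mp h) hdeg)

lemma partB {k : Type*} [Field k] (g : k[X]) :
    ¬ IsReduced (AdjoinRoot ((X : (k[X])[X]) ^ 2 - C g)) ↔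
      (4 : k[X]) * g = 0 ∧ IsSquare (-g) := by
  set G : (k[X])[X] := (X : (k[X])[X]) ^ 2 - C g with hG
  have hGdeg : G.degree = 2 := deg_sq_sub_C g
  have hGmon : G.Monic := mon_sq_sub_C g
  constructor
  · intro hnr
    have hnsf : ¬ Squarefree G := by
      intro hsf
      apply hnr
      constructor
      intro x hx
      obtain ⟨p, rfl⟩ := AdjoinRoot.mk_surjective x
      obtain ⟨m, hm⟩ := hx
      rw [← map_pow, AdjoinRoot.mk_eq_zero] at hm
      rw [AdjoinRoot.mk_eq_zero]
      exact hsf.isRadical m p hm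
    rw [Squarefree] at hnsf
    push_neg at hnsf
    obtain ⟨x, hdvd, hxu⟩ := hnsf
    obtain ⟨q, hq⟩ := hdvd
    have hG0 : G ≠ 0 := hGmon.ne_zero
    have hx0 : x ≠ 0 := by rintro rfl; simp at hq; exact hG0 hq
    have hq0 : q ≠ 0 := by rintro rfl; simp at hq; exact hG0 hq
    have hndG : G.natDegree = 2 := natDegree_eq_of_degree_eq_some hGdeg
    have hnd : x.natDegree + x.natDegree + q.natDegree = 2 := by
      rw [← hndG, hq, natDegree_mul (mul_ne_zero hx0 hx0) hq0, natDegree_mul hx0 hx0]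
    have hcase : x.natDegree = 0 ∨ (x.natDegree = 1 ∧ q.natDegree = 0) := by omega
    rcases hcase with h0 | ⟨h1, hq1⟩
    · exfalso
      obtain ⟨s, rfl⟩ := Polynomial.natDegree_eq_zero.mp h0
      have hl := congrArg leadingCoeff hq
      rw [hGmon.leadingCoeff, leadingCoeff_mul, leadingCoeff_mul, leadingCoeff_C] at hl
      exact hxu (isUnit_C.mpr (IsUnit.of_mul_eq_one (a := s) (s * q.leadingCoeff)
        (by linear_combination -hl)))
    · obtain ⟨w, rfl⟩ := Polynomial.natDegree_eq_zero.mp hq1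
      set a := x.coeff 1 with ha
      set b := x.coeff 0 with hb
      have hxe : x = C a * X + C b := eq_X_add_C_of_natDegree_le_one (le_of_eq h1)
      rw [hxe] at hq
      have hexp : (C a * X + C b) * (C a * X + C b) * C w
          = C (a*a*w) * X ^ 2 + C (2*(a*b*w)) * X + C (b*b*w) := by
        simp only [map_mul, map_ofNat, map_add]
        ring
      rw [hexp] at hq
      have c2 : (1 : k[X]) = a*a*w := by
        have := congrArg (fun p => coeff p 2) hq
        simp only [hG, coeff_sub, coeff_add, coeff_C_mul, coeff_X_pow, coeff_X, coeff_C] at this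
        simpa using this
      have c1 : (0 : k[X]) = 2*(a*b*w) := by
        have := congrArg (fun p => coeff p 1) hq
        simp only [hG, coeff_sub, coeff_add, coeff_C_mul, coeff_X_pow, coeff_X, coeff_C] at this
        simpa using this
      have c0 : -g = b*b*w := by
        have := congrArg (fun p => coeff p 0) hq
        simp only [hG, coeff_sub, coeff_add, coeff_C_mul, coeff_X_pow, coeff_X, coeff_C] at this
        simpa using this
      have h2b : (2 : k[X]) * b = 0 := by
        linear_combination -a*c1 + 2*b*c2
      constructor
      · linear_combination -4*c0 - 2*b*w*h2b
      · exact ⟨a*b*w, by linear_combination c0 + b*b*w*c2⟩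
  · rintro ⟨h4, h, hh⟩
    intro hred
    have h2h : (2 : k[X]) * h = 0 := by
      have : ((2:k[X]) * h) * ((2:k[X]) * h) = 0 := by linear_combination -h4 - 4*hh
      exact (mul_self_eq_zero).mp this
    have hGe : G = (X + C h) ^ 2 - C ((2:k[X])*h) * X := by
      have hg' : g = -(h * h) := by linear_combination -hh
      rw [hG, hg']
      simp only [map_neg, map_mul, map_ofNat]
      ring
    have hsq : (AdjoinRoot.mk G (X + C h)) ^ 2 = 0 := by
      rw [← map_pow, AdjoinRoot.mk_eq_zero]
      refine ⟨1, ?_⟩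
      rw [hGe, h2h]
      simp
    have hne : AdjoinRoot.mk G (X + C h) ≠ 0 := by
      apply adj_mk_ne_zero (g := G)
      · rw [hGdeg, degree_X_add_C h]
        norm_num
      · intro h0
        have := congrArg (fun p => coeff p 1) h0
        simp at this
    exact hne (hred.1 _ ⟨2, hsq⟩)

set_option maxHeartbeats 2000000 in
/-- Liu's lemma. -/
theorem liu_normality_lemma (R : Type) [CommRing R] [IsDomain R] [IsDiscreteValuationRing R]
    [PerfectField (IsLocalRing.ResidueField R)] (f : R[X])
    (hgen_dom : IsDomain
      (AdjoinRoot ((X : ((FractionRing R)[X])[X]) ^ 2 - C (f.map (algebraMap R (FractionRing R))))))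
    (hgen_ic : IsIntegrallyClosed
      (AdjoinRoot ((X : ((FractionRing R)[X])[X]) ^ 2 - C (f.map (algebraMap R (FractionRing R)))))) :
    (IsReduced
        (AdjoinRoot ((X : ((IsLocalRing.ResidueField R)[X])[X]) ^ 2 -
          C (f.map (IsLocalRing.residue R)))) →
      IsDomain (AdjoinRoot ((X : (R[X])[X]) ^ 2 - C f)) ∧
        IsIntegrallyClosed (AdjoinRoot ((X : (R[X])[X]) ^ 2 - C f)))
    ∧
    (¬ IsReduced
        (AdjoinRoot ((X : ((IsLocalRing.ResidueField R)[X])[X]) ^ 2 -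
          C (f.map (IsLocalRing.residue R)))) ↔
      (4 : (IsLocalRing.ResidueField R)[X]) * f.map (IsLocalRing.residue R) = 0 ∧
        IsSquare (-(f.map (IsLocalRing.residue R)))) := by
  refine ⟨?_, partB _⟩
  intro hred
  haveI := hgen_dom
  obtain ⟨π, hπ⟩ := IsDiscreteValuationRing.exists_irreducible R
  have halg : Function.Injective (algebraMap R (FractionRing R)) :=
    IsFractionRing.injective R (FractionRing R)
  -- the three rings
  set G : (R[X])[X] := (X : (R[X])[X]) ^ 2 - C f with hGdef
  -- the generic-fiber comparison map
  let φ : AdjoinRoot G →+*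
      AdjoinRoot ((X : ((FractionRing R)[X])[X]) ^ 2 - C (f.map (algebraMap R (FractionRing R)))) :=
    adjm (mapRingHom (algebraMap R (FractionRing R))) f
  -- the special-fiber comparison map
  let ψ : AdjoinRoot G →+*
      AdjoinRoot ((X : ((IsLocalRing.ResidueField R)[X])[X]) ^ 2 -
        C (f.map (IsLocalRing.residue R))) :=
    adjm (mapRingHom (IsLocalRing.residue R)) f
  have hσinj : Function.Injective (mapRingHom (algebraMap R (FractionRing R)) :
      R[X] →+* (FractionRing R)[X]) := by
    rw [coe_mapRingHom]
    exact Polynomial.map_injective _ halg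
  have hφinj : Function.Injective φ := adjm_injective _ _ hσinj
  haveI hBdom : IsDomain (AdjoinRoot G) := Function.Injective.isDomain φ hφinj
  refine ⟨hBdom, ?_⟩
  -- notation for the uniformizer inside the rings
  set πB : AdjoinRoot G := AdjoinRoot.of G (C π) with hπBdef
  have hπ0 : algebraMap R (FractionRing R) π ≠ 0 := fun h => hπ.ne_zero (halg (by simpa using h))
  have hπKunit : IsUnit (AdjoinRoot.of _ (C (algebraMap R (FractionRing R) π)) :
      AdjoinRoot ((X : ((FractionRing R)[X])[X]) ^ 2 -
        C (f.map (algebraMap R (FractionRing R))))) :=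
    (isUnit_C.mpr (isUnit_iff_ne_zero.mpr hπ0)).map (AdjoinRoot.of _)
  have hφπ : φ πB = AdjoinRoot.of _ (C (algebraMap R (FractionRing R) π)) := by
    rw [hπBdef]
    show adjm _ f (AdjoinRoot.of G (C π)) = _
    rw [adjm_of]
    congr 1
    simp [coe_mapRingHom]
  -- clearing denominators in the generic fiber
  have hclear : ∀ z : AdjoinRoot ((X : ((FractionRing R)[X])[X]) ^ 2 -
      C (f.map (algebraMap R (FractionRing R)))),
      ∃ (n : ℕ) (b : AdjoinRoot G),
        φ b = (AdjoinRoot.of _ (C (algebraMap R (FractionRing R) π))) ^ n * z := by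
    intro z
    obtain ⟨p, rfl⟩ := AdjoinRoot.mk_surjective z
    obtain ⟨n, q, hq⟩ := clear_poly (mapRingHom (algebraMap R (FractionRing R))) (C π)
      (fun y => by
        obtain ⟨n, r, hr⟩ := clear_poly (algebraMap R (FractionRing R)) π (clear_base hπ) y
        exact ⟨n, r, by simpa [coe_mapRingHom] using hr⟩) p
    refine ⟨n, AdjoinRoot.mk G q, ?_⟩
    show adjm _ f (AdjoinRoot.mk G q) = _
    rw [adjm_mk, ← hq, map_mul, map_pow]
    congr 2
    rw [AdjoinRoot.mk_C]
    congr 1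
    simp [coe_mapRingHom]
  -- kernel of the special-fiber map is generated by π
  have hker : ∀ b : AdjoinRoot G, ψ b = 0 → ∃ b', b = πB * b' := by
    intro b hb
    obtain ⟨p, rfl⟩ := AdjoinRoot.mk_surjective b
    have hmon := mon_sq_sub_C f
    set q := p %ₘ ((X : (R[X])[X]) ^ 2 - C f) with hqdef
    have hpq : AdjoinRoot.mk G p = AdjoinRoot.mk G q := by
      rw [AdjoinRoot.mk_eq_mk]
      exact ⟨p /ₘ _, by rw [hGdef]; linear_combination - modByMonic_add_div p ((X : (R[X])[X]) ^ 2 - C f)⟩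
    rw [hpq] at hb ⊢
    have hb' : AdjoinRoot.mk ((X : ((IsLocalRing.ResidueField R)[X])[X]) ^ 2 -
        C ((mapRingHom (IsLocalRing.residue R)) f)) (q.map (mapRingHom (IsLocalRing.residue R)))
        = 0 := by
      rw [← adjm_mk]
      exact hb
    rw [AdjoinRoot.mk_eq_zero] at hb'
    have hdeg : (q.map (mapRingHom (IsLocalRing.residue R))).degree <
        ((X : ((IsLocalRing.ResidueField R)[X])[X]) ^ 2 -
          C ((mapRingHom (IsLocalRing.residue R)) f)).degree := by
      calc (q.map (mapRingHom (IsLocalRing.residue R))).degree ≤ q.degree := degree_map_le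
      _ < ((X : (R[X])[X]) ^ 2 - C f).degree := degree_modByMonic_lt p hmon
      _ = 2 := deg_sq_sub_C f
      _ = _ := (deg_sq_sub_C _).symm
    have hq0 : q.map (mapRingHom (IsLocalRing.residue R)) = 0 :=
      eq_zero_of_dvd_of_degree_lt hb' hdeg
    -- so every coefficient of q is divisible by π
    have hdvd : C (C π) ∣ q := by
      rw [Polynomial.C_dvd_iff_dvd_coeff]
      intro i
      rw [Polynomial.C_dvd_iff_dvd_coeff]
      intro j
      rw [← Ideal.mem_span_singleton, ← hπ.maximalIdeal_eq]
      rw [← Ideal.Quotient.eq_zero_iff_mem]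
      have h1 : (q.map (mapRingHom (IsLocalRing.residue R))).coeff i = 0 := by rw [hq0]; simp
      rw [coeff_map, coe_mapRingHom] at h1
      have h2 := congrArg (fun r => coeff r j) h1
      simp only [coeff_map, coeff_zero] at h2
      exact h2
    obtain ⟨q', hq'⟩ := hdvd
    exact ⟨AdjoinRoot.mk G q', by rw [hq', map_mul]; rfl⟩
  -- ψ kills π
  have hψπ : ψ πB = 0 := by
    rw [hπBdef]
    show adjm _ f (AdjoinRoot.of G (C π)) = _
    rw [adjm_of]
    have hres : (mapRingHom (IsLocalRing.residue R)) (C π) = 0 := by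
      have : IsLocalRing.residue R π = 0 :=
        Ideal.Quotient.eq_zero_iff_mem.mpr ((IsLocalRing.mem_maximalIdeal π).mpr hπ.not_isUnit)
      simp [coe_mapRingHom, this]
    rw [hres, map_zero]
    rfl
  -- localization structure
  letI : Algebra (AdjoinRoot G) (AdjoinRoot ((X : ((FractionRing R)[X])[X]) ^ 2 -
      C (f.map (algebraMap R (FractionRing R))))) := φ.toAlgebra
  have halgBK : ∀ b, algebraMap (AdjoinRoot G) (AdjoinRoot ((X : ((FractionRing R)[X])[X]) ^ 2 -
      C (f.map (algebraMap R (FractionRing R))))) b = φ b := fun _ => rfl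
  haveI hloc : IsLocalization (Submonoid.powers πB)
      (AdjoinRoot ((X : ((FractionRing R)[X])[X]) ^ 2 -
        C (f.map (algebraMap R (FractionRing R))))) := by
    refine ⟨⟨?_, ?_, ?_⟩⟩
    · rintro ⟨y, m, rfl⟩
      rw [halgBK, map_pow, hφπ]
      exact hπKunit.pow m
    · intro z
      obtain ⟨n, b, hb⟩ := hclear z
      refine ⟨⟨b, ⟨πB ^ n, ⟨n, rfl⟩⟩⟩, ?_⟩
      rw [halgBK, halgBK, map_pow, hφπ, hb]
      ring
    · intro b b' h
      rw [halgBK, halgBK] at h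
      exact ⟨1, by rw [hφinj h]⟩
  have hπB0 : πB ≠ 0 := by
    intro h0
    have := hφπ
    rw [h0, map_zero] at this
    exact hπKunit.ne_zero this.symm
  have hSle : Submonoid.powers πB ≤ nonZeroDivisors (AdjoinRoot G) := by
    rintro y ⟨m, rfl⟩
    exact mem_nonZeroDivisors_of_ne_zero (pow_ne_zero m hπB0)
  have hBLinj : Function.Injective
      (algebraMap (AdjoinRoot G) (FractionRing (AdjoinRoot G))) :=
    IsFractionRing.injective _ _
  have hunits : ∀ y : Submonoid.powers πB,
      IsUnit (algebraMap (AdjoinRoot G) (FractionRing (AdjoinRoot G)) y) := by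
    rintro ⟨y, m, rfl⟩
    rw [map_pow]
    exact (isUnit_iff_ne_zero.mpr (fun h0 => hπB0 (hBLinj (by simpa using h0)))).pow m
  letI : Algebra (AdjoinRoot ((X : ((FractionRing R)[X])[X]) ^ 2 -
      C (f.map (algebraMap R (FractionRing R))))) (FractionRing (AdjoinRoot G)) :=
    (IsLocalization.lift hunits).toAlgebra
  haveI : IsScalarTower (AdjoinRoot G)
      (AdjoinRoot ((X : ((FractionRing R)[X])[X]) ^ 2 -
        C (f.map (algebraMap R (FractionRing R))))) (FractionRing (AdjoinRoot G)) :=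
    IsScalarTower.of_algebraMap_eq (fun b => by
      rw [RingHom.algebraMap_toAlgebra]
      exact (IsLocalization.lift_eq (S := AdjoinRoot ((X : ((FractionRing R)[X])[X]) ^ 2 - C (f.map (algebraMap R (FractionRing R))))) hunits b).symm)
  haveI : IsFractionRing (AdjoinRoot ((X : ((FractionRing R)[X])[X]) ^ 2 -
      C (f.map (algebraMap R (FractionRing R))))) (FractionRing (AdjoinRoot G)) :=
    IsFractionRing.isFractionRing_of_isDomain_of_isLocalization (Submonoid.powers πB) _ _
  haveI := hgen_ic
  rw [isIntegrallyClosed_iff (FractionRing (AdjoinRoot G))]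
  intro x hx
  have hxK : IsIntegral (AdjoinRoot ((X : ((FractionRing R)[X])[X]) ^ 2 -
      C (f.map (algebraMap R (FractionRing R))))) x := IsIntegral.tower_top hx
  obtain ⟨z, hz⟩ := IsIntegrallyClosed.isIntegral_iff.mp hxK
  obtain ⟨n, b, hb⟩ := hclear z
  have htow : ∀ c, algebraMap (AdjoinRoot ((X : ((FractionRing R)[X])[X]) ^ 2 -
      C (f.map (algebraMap R (FractionRing R))))) (FractionRing (AdjoinRoot G)) (φ c)
      = algebraMap (AdjoinRoot G) (FractionRing (AdjoinRoot G)) c :=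
    fun c => by
      rw [RingHom.algebraMap_toAlgebra]
      exact IsLocalization.lift_eq (S := AdjoinRoot ((X : ((FractionRing R)[X])[X]) ^ 2 - C (f.map (algebraMap R (FractionRing R))))) hunits c
  have hL : algebraMap (AdjoinRoot G) (FractionRing (AdjoinRoot G)) b
      = algebraMap (AdjoinRoot G) (FractionRing (AdjoinRoot G)) πB ^ n * x := by
    have h1 := congrArg (algebraMap (AdjoinRoot ((X : ((FractionRing R)[X])[X]) ^ 2 -
      C (f.map (algebraMap R (FractionRing R))))) (FractionRing (AdjoinRoot G))) hb
    rw [map_mul, map_pow, htow, hz, ← hφπ, htow] at h1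
    exact h1
  have main : ∀ (n : ℕ) (b : AdjoinRoot G),
      algebraMap (AdjoinRoot G) (FractionRing (AdjoinRoot G)) b
        = algebraMap (AdjoinRoot G) (FractionRing (AdjoinRoot G)) πB ^ n * x →
      ∃ y, algebraMap (AdjoinRoot G) (FractionRing (AdjoinRoot G)) y = x := by
    intro n
    induction n with
    | zero =>
      intro b h
      exact ⟨b, by simpa using h⟩
    | succ n ih =>
      intro b h
      obtain ⟨P, Pmono, Peval⟩ := hx
      have hm : 0 < P.natDegree := by
        by_contra h0
        push_neg at h0
        have hP1 : P = 1 := Pmono.natDegree_eq_zero.mp (Nat.le_zero.mp h0)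
        rw [hP1] at Peval
        simp at Peval
      have hxm : x ^ P.natDegree
          = -∑ i ∈ Finset.range P.natDegree,
              algebraMap (AdjoinRoot G) (FractionRing (AdjoinRoot G)) (P.coeff i) * x ^ i := by
        rw [eval₂_eq_sum_range, Finset.sum_range_succ, Pmono.coeff_natDegree, map_one,
          one_mul] at Peval
        linear_combination Peval
      have hterm : ∀ i ∈ Finset.range P.natDegree,
          -(algebraMap (AdjoinRoot G) (FractionRing (AdjoinRoot G)) πB ^ ((n+1) * P.natDegree)
              * (algebraMap (AdjoinRoot G) (FractionRing (AdjoinRoot G)) (P.coeff i) * x ^ i))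
          = algebraMap (AdjoinRoot G) (FractionRing (AdjoinRoot G))
              (-(P.coeff i * b ^ i * πB ^ ((n+1)*(P.natDegree - 1 - i) + n)) * πB) := by
        intro i hi
        have hi' := Finset.mem_range.mp hi
        obtain ⟨j, hj⟩ : ∃ j, P.natDegree = i + j + 1 := ⟨P.natDegree - i - 1, by omega⟩
        have h1 : P.natDegree - 1 - i = j := by omega
        rw [h1, hj, map_mul, map_neg, map_mul, map_mul, map_pow, map_pow, h]
        ring_nf
      have key : algebraMap (AdjoinRoot G) (FractionRing (AdjoinRoot G)) (b ^ P.natDegree)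
          = algebraMap (AdjoinRoot G) (FractionRing (AdjoinRoot G))
              ((∑ i ∈ Finset.range P.natDegree,
                -(P.coeff i * b ^ i * πB ^ ((n+1)*(P.natDegree - 1 - i) + n))) * πB) := by
        calc algebraMap (AdjoinRoot G) (FractionRing (AdjoinRoot G)) (b ^ P.natDegree)
            = (algebraMap (AdjoinRoot G) (FractionRing (AdjoinRoot G)) πB ^ (n+1) * x)
                ^ P.natDegree := by rw [map_pow, h]
          _ = algebraMap (AdjoinRoot G) (FractionRing (AdjoinRoot G)) πB ^ ((n+1) * P.natDegree)
                * x ^ P.natDegree := by rw [mul_pow, ← pow_mul]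
          _ = ∑ i ∈ Finset.range P.natDegree,
                -(algebraMap (AdjoinRoot G) (FractionRing (AdjoinRoot G)) πB
                    ^ ((n+1) * P.natDegree)
                  * (algebraMap (AdjoinRoot G) (FractionRing (AdjoinRoot G)) (P.coeff i)
                      * x ^ i)) := by
              rw [hxm, mul_neg, Finset.mul_sum, ← Finset.sum_neg_distrib]
          _ = ∑ i ∈ Finset.range P.natDegree,
                algebraMap (AdjoinRoot G) (FractionRing (AdjoinRoot G))
                  (-(P.coeff i * b ^ i * πB ^ ((n+1)*(P.natDegree - 1 - i) + n)) * πB) :=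
              Finset.sum_congr rfl hterm
          _ = algebraMap (AdjoinRoot G) (FractionRing (AdjoinRoot G))
              ((∑ i ∈ Finset.range P.natDegree,
                -(P.coeff i * b ^ i * πB ^ ((n+1)*(P.natDegree - 1 - i) + n))) * πB) := by
              simp only [map_mul, map_sum, Finset.sum_mul]
      have hbm : b ^ P.natDegree = (∑ i ∈ Finset.range P.natDegree,
          -(P.coeff i * b ^ i * πB ^ ((n+1)*(P.natDegree - 1 - i) + n))) * πB := hBLinj key
      have hψb : ψ b = 0 := by
        haveI := hred
        have hnil : (ψ b) ^ P.natDegree = 0 := by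
          rw [← map_pow, hbm, map_mul, hψπ, mul_zero]
        exact IsNilpotent.eq_zero ⟨P.natDegree, hnil⟩
      obtain ⟨b', hb'⟩ := hker b hψb
      apply ih b'
      have hπL0 : algebraMap (AdjoinRoot G) (FractionRing (AdjoinRoot G)) πB ≠ 0 :=
        fun h0 => hπB0 (hBLinj (by simpa using h0))
      have hcancel : algebraMap (AdjoinRoot G) (FractionRing (AdjoinRoot G)) πB
            * algebraMap (AdjoinRoot G) (FractionRing (AdjoinRoot G)) b'
          = algebraMap (AdjoinRoot G) (FractionRing (AdjoinRoot G)) πB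
            * (algebraMap (AdjoinRoot G) (FractionRing (AdjoinRoot G)) πB ^ n * x) := by
        rw [← map_mul, ← hb', h, pow_succ]
        ring
      exact mul_left_cancel₀ hπL0 hcancel
  exact main n b hL
end
end

section
/- Let R be a commutative ring, let a, b, c ∈ R, set D = b² − ac, and let S = R[Y]/(Y² − D) with y the image of Y. Then the ideal identity (a, y − b)·(a, y + b) = (a)·(a, y − b, y + b, c) holds in S. In particular, if the ideal (a, 2b, c) equals the unit ideal of R, then (a, y − b)·(a, y + b) = (a); hence if moreover S is an integral domain and a ≠ 0, the ideal (a, y − b) is invertible as a fractional ideal of S, with inverse (1/a)(a, y + b). -/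
open Polynomial

noncomputable section

/-- The quadratic algebra `S = R[Y]/(Y² - D)`. -/
abbrev QAlg (R : Type) [CommRing R] (D : R) : Type := AdjoinRoot ((X : R[X]) ^ 2 - C D)

/-- The image `y` of `Y` in `R[Y]/(Y² - D)`. -/
abbrev qY (R : Type) [CommRing R] (D : R) : QAlg R D := AdjoinRoot.root _

/-- The structure map `R → R[Y]/(Y² - D)`. -/
abbrev qι (R : Type) [CommRing R] (D : R) : R →+* QAlg R D := AdjoinRoot.of _

/-- Let `R` be a commutative ring, `a b c ∈ R`, `D = b² - ac`, and
`S = R[Y]/(Y² - D)` with `y` the image of `Y`.  Then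
`(a, y-b)·(a, y+b) = (a)·(a, y-b, y+b, c)`.  If `(a, 2b, c) = (1)` then
`(a, y-b)·(a, y+b) = (a)`; hence if moreover `S` is a domain and `a ≠ 0`, the ideal
`(a, y-b)` is invertible as a fractional ideal of `S` with inverse `(1/a)·(a, y+b)`
(i.e. there is a fractional ideal `J` with `(a,y-b)·J = 1` and `a·J = (a, y+b)`). -/
theorem quadratic_form_ideal_identity (R : Type) [CommRing R] (a b c D : R)
    (hD : D = b ^ 2 - a * c) :
    (Ideal.span {qι R D a, qY R D - qι R D b} * Ideal.span {qι R D a, qY R D + qι R D b} =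
        Ideal.span {qι R D a} *
          Ideal.span {qι R D a, qY R D - qι R D b, qY R D + qι R D b, qι R D c})
    ∧
    (Ideal.span ({a, 2 * b, c} : Set R) = ⊤ →
      (Ideal.span {qι R D a, qY R D - qι R D b} * Ideal.span {qι R D a, qY R D + qι R D b} =
          Ideal.span {qι R D a})
      ∧
      (IsDomain (QAlg R D) → a ≠ 0 →
        ∃ J : FractionalIdeal (nonZeroDivisors (QAlg R D)) (FractionRing (QAlg R D)),
          (Ideal.span {qι R D a, qY R D - qι R D b} : Ideal (QAlg R D)) * J = 1 ∧
            FractionalIdeal.spanSingleton (nonZeroDivisors (QAlg R D))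
              (algebraMap (QAlg R D) (FractionRing (QAlg R D)) (qι R D a)) * J =
              (Ideal.span {qι R D a, qY R D + qι R D b} : Ideal (QAlg R D)))) := by
  set A := qι R D a with hA
  set B := qι R D b with hB
  set Cc := qι R D c with hCc
  set y := qY R D with hy0
  -- the relation y² = D
  have hy2 : y ^ 2 = qι R D D := by
    have h := AdjoinRoot.mk_self (f := ((X : R[X]) ^ 2 - C D))
    rw [map_sub, map_pow, AdjoinRoot.mk_X, AdjoinRoot.mk_C, sub_eq_zero] at h
    exact h
  have h1 : (y - B) * (y + B) = -(A * Cc) := by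
    have hD' := congrArg (qι R D) hD
    rw [map_sub, map_mul, map_pow] at hD'
    have hy2' : y ^ 2 = B ^ 2 - A * Cc := by rw [hy2, hD']
    linear_combination hy2'
  -- Part 1
  have part1 :
      Ideal.span {A, y - B} * Ideal.span {A, y + B} =
        Ideal.span {A} * Ideal.span {A, y - B, y + B, Cc} := by
    rw [Ideal.span_pair_mul_span_pair, mul_comm (y - B) A, h1]
    rw [Ideal.span_insert (A * A), Ideal.span_insert (A * (y + B)),
      Ideal.span_insert (A * (y - B)), Ideal.span_singleton_neg,
      Ideal.span_insert A, Ideal.span_insert (y - B), Ideal.span_insert (y + B),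
      Ideal.mul_sup, Ideal.mul_sup, Ideal.mul_sup,
      Ideal.span_singleton_mul_span_singleton, Ideal.span_singleton_mul_span_singleton,
      Ideal.span_singleton_mul_span_singleton, Ideal.span_singleton_mul_span_singleton,
      sup_left_comm (Ideal.span {A * (y + B)})]
  refine ⟨part1, fun htop => ?_⟩
  -- Part 2
  have htopS : Ideal.span ({A, y - B, y + B, Cc} : Set (QAlg R D)) = ⊤ := by
    rw [eq_top_iff, ← Ideal.map_top (qι R D), ← htop, Ideal.map_span, Ideal.span_le]
    rintro x hx
    simp only [Set.image_insert_eq, Set.image_singleton, Set.mem_insert_iff,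
      Set.mem_singleton_iff] at hx
    rcases hx with rfl | rfl | rfl
    · exact Ideal.subset_span (by simp [hA])
    · have : qι R D (2 * b) = (y + B) - (y - B) := by
        push_cast [map_mul, map_ofNat]; ring
      rw [this]
      exact sub_mem (Ideal.subset_span (by simp)) (Ideal.subset_span (by simp))
    · exact Ideal.subset_span (by simp [hCc])
  have part2 : Ideal.span {A, y - B} * Ideal.span {A, y + B} = Ideal.span {A} := by
    rw [part1, htopS, Ideal.mul_top]
  refine ⟨part2, fun hdom ha => ?_⟩
  haveI := hdom
  haveI : Nontrivial R := ⟨⟨a, 0, ha⟩⟩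
  have hAne : A ≠ 0 := by
    rw [hA]
    show AdjoinRoot.mk _ (C a) ≠ 0
    exact AdjoinRoot.mk_ne_zero_of_natDegree_lt
      (Polynomial.monic_X_pow_sub_C D two_ne_zero)
      (by simpa using ha)
      (by simp [Polynomial.natDegree_X_pow_sub_C])
  set K := FractionRing (QAlg R D)
  set g := algebraMap (QAlg R D) K
  have hgA : g A ≠ 0 := fun h =>
    hAne (IsFractionRing.injective (QAlg R D) K (by rw [map_zero]; exact h))
  refine ⟨FractionalIdeal.spanSingleton _ (g A)⁻¹ *
      ((Ideal.span {A, y + B} : Ideal (QAlg R D)) :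
        FractionalIdeal (nonZeroDivisors (QAlg R D)) K), ?_, ?_⟩
  · rw [mul_comm (FractionalIdeal.spanSingleton _ (g A)⁻¹), ← mul_assoc,
      ← FractionalIdeal.coeIdeal_mul, part2, FractionalIdeal.coeIdeal_span_singleton,
      FractionalIdeal.spanSingleton_mul_spanSingleton, mul_inv_cancel₀ hgA,
      FractionalIdeal.spanSingleton_one]
  · rw [← mul_assoc, FractionalIdeal.spanSingleton_mul_spanSingleton,
      mul_inv_cancel₀ hgA, FractionalIdeal.spanSingleton_one, one_mul]
end
end

section
/- (Mumford representation.) Let g ≥ 1 and let f ∈ ℚ[X] be a square-free monic polynomial of degree 2g+1, and set S = ℚ[X,Y]/(Y² − f) with y the image of Y. Then every element of the class group of S is the class of an ideal (a, y − b) for a unique pair (a, b) ∈ ℚ[X]² such that a is monic, deg b < deg a ≤ g, and a divides b² − f. -/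
open Polynomial

noncomputable section

/-- An ideal is invertible as a fractional ideal iff its product with some ideal is
a nonzero principal ideal. -/
def IsInvIdeal {S : Type*} [CommRing S] (I : Ideal S) : Prop :=
  ∃ (J : Ideal S) (r : S), r ≠ 0 ∧ I * J = Ideal.span {r}

/-- Two invertible ideals of a domain have the same class in the class group iff they agree
up to nonzero principal multiples. -/
def ClassEq {S : Type*} [CommRing S] (I J : Ideal S) : Prop :=
  ∃ s t : S, s ≠ 0 ∧ t ≠ 0 ∧ Ideal.span {s} * I = Ideal.span {t} * J

set_option linter.dupNamespace false
section MumfordAux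
namespace Mumford

variable (f : ℚ[X])

local notation "S" => QAlg (ℚ[X]) f
local notation "ι" => qι (ℚ[X]) f
local notation "yy" => qY (ℚ[X]) f



lemma hmonic : ((X : (ℚ[X])[X]) ^ 2 - C f).Monic := by
  apply monic_X_pow_sub
  exact (degree_C_le).trans_lt (by norm_num)

lemma hdeg2 : ((X : (ℚ[X])[X]) ^ 2 - C f).degree = 2 := by
  have h1 : (C f : (ℚ[X])[X]).degree < (X ^ 2 : (ℚ[X])[X]).degree := by
    simpa [degree_X_pow] using (degree_C_le).trans_lt (by norm_num : (0:WithBot ℕ) < 2)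
  rw [degree_sub_eq_left_of_degree_lt h1, degree_X_pow]; rfl

lemma ysq : (yy) ^ 2 = ι f := by
  have h := AdjoinRoot.mk_self (f := (X : (ℚ[X])[X]) ^ 2 - C f)
  have h2 : (AdjoinRoot.mk _ ) ((X : (ℚ[X])[X]) ^ 2 - C f) =
      (yy) ^ 2 - ι f := by
    simp [map_sub, map_pow, AdjoinRoot.mk_X, AdjoinRoot.mk_C]
  rw [h2] at h
  linear_combination h

lemma rep_ex (z : S) : ∃ u v : ℚ[X], z = ι u + ι v * yy := by
  obtain ⟨P, rfl⟩ := AdjoinRoot.mk_surjective z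
  refine ⟨(P %ₘ ((X : (ℚ[X])[X]) ^ 2 - C f)).coeff 0,
    (P %ₘ ((X : (ℚ[X])[X]) ^ 2 - C f)).coeff 1, ?_⟩
  conv_lhs => rw [← modByMonic_add_div P (X ^ 2 - C f)]
  have hlt : (P %ₘ ((X : (ℚ[X])[X]) ^ 2 - C f)).degree ≤ 1 := by
    have := degree_modByMonic_lt P (hmonic f)
    rw [hdeg2] at this
    exact Order.le_of_lt_succ (by exact_mod_cast this)
  rw [map_add, map_mul, AdjoinRoot.mk_self, zero_mul, add_zero]
  conv_lhs => rw [eq_X_add_C_of_degree_le_one hlt]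
  simp [AdjoinRoot.mk_C, AdjoinRoot.mk_X]
  ring

lemma rep_zero {u v : ℚ[X]} (h : ι u + ι v * yy = 0) : u = 0 ∧ v = 0 := by
  have hmk : (AdjoinRoot.mk ((X : (ℚ[X])[X]) ^ 2 - C f)) (C u + C v * X) = 0 := by
    simpa [AdjoinRoot.mk_C, AdjoinRoot.mk_X] using h
  rw [AdjoinRoot.mk_eq_zero] at hmk
  have hz : (C u + C v * X : (ℚ[X])[X]) = 0 := by
    by_contra hne
    have := Polynomial.degree_le_of_dvd hmk hne
    rw [hdeg2] at this
    have hle : (C u + C v * X : (ℚ[X])[X]).degree ≤ 1 := by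
      refine le_trans (degree_add_le _ _) ?_
      refine max_le (degree_C_le.trans (by norm_num)) ?_
      refine le_trans (degree_mul_le _ _) ?_
      have := degree_C_le (a := v) (R := ℚ[X])
      calc (C v : (ℚ[X])[X]).degree + (X : (ℚ[X])[X]).degree ≤ 0 + 1 := by
            exact add_le_add degree_C_le (by rw [degree_X])
        _ = 1 := by norm_num
    exact absurd (this.trans hle) (by norm_num)
  constructor
  · have := congrArg (fun p => Polynomial.coeff p 0) hz
    simpa using this
  · have := congrArg (fun p => Polynomial.coeff p 1) hz
    simpa using this

lemma rep_unique {u v u' v' : ℚ[X]} (h : ι u + ι v * yy = ι u' + ι v' * yy) :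
    u = u' ∧ v = v' := by
  have : ι (u - u') + ι (v - v') * yy = 0 := by
    rw [map_sub, map_sub]; ring_nf; linear_combination h
  have := rep_zero f this
  constructor <;> [skip; skip] <;> [exact sub_eq_zero.mp this.1; exact sub_eq_zero.mp this.2]

lemma iota_inj : Function.Injective (ι) := by
  intro a b h
  have : ι (a) + ι 0 * yy = ι b + ι 0 * yy := by simpa using h
  exact (rep_unique f this).1

lemma mul_rep (u v u' v' : ℚ[X]) :
    (ι u + ι v * yy) * (ι u' + ι v' * yy) =
      ι (u * u' + v * v' * f) + ι (u * v' + u' * v) * yy := by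
  have hy := ysq f
  push_cast [map_add, map_mul]
  ring_nf
  rw [show (yy) ^ 2 = ι f from hy]
  ring


lemma norm_poly_ne_zero (hodd : Odd f.natDegree) (hf0 : f ≠ 0) {u v : ℚ[X]}
    (h : ¬ (u = 0 ∧ v = 0)) : u ^ 2 - v ^ 2 * f ≠ 0 := by
  intro hz
  rcases eq_or_ne v 0 with hv | hv
  · subst hv
    have : u ^ 2 = 0 := by linear_combination hz
    exact h ⟨pow_eq_zero_iff (n := 2) (by norm_num) |>.mp this, rfl⟩
  · have hu2 : u ^ 2 = v ^ 2 * f := by linear_combination hz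
    have hu : u ≠ 0 := by
      intro hu0; subst hu0
      simp only [ne_eq, zero_pow, OfNat.ofNat_ne_zero, not_false_eq_true] at hu2
      exact (mul_ne_zero (pow_ne_zero 2 hv) hf0) hu2.symm
    have := congrArg natDegree hu2
    rw [natDegree_pow, natDegree_mul (pow_ne_zero 2 hv) hf0, natDegree_pow] at this
    obtain ⟨k, hk⟩ := hodd
    omega

lemma nontrivS : (0 : S) ≠ 1 := by
  intro h
  have : ι (0:ℚ[X]) + ι 0 * yy = ι 1 + ι 0 * yy := by simpa using h
  exact one_ne_zero ((rep_unique f this).1).symm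

lemma sdomain (hodd : Odd f.natDegree) (hf0 : f ≠ 0) : IsDomain S := by
  have hnzd : ∀ z w : S, z * w = 0 → z = 0 ∨ w = 0 := by
    intro z w hzw
    obtain ⟨u, v, rfl⟩ := rep_ex f z
    obtain ⟨u', v', rfl⟩ := rep_ex f w
    rw [mul_rep] at hzw
    have h0 : (0 : S) = ι 0 + ι 0 * yy := by simp
    rw [h0] at hzw
    obtain ⟨h1, h2⟩ := rep_unique f hzw
    have key : (u ^ 2 - v ^ 2 * f) * (u' ^ 2 - v' ^ 2 * f) = 0 := by
      have : (u * u' + v * v' * f) ^ 2 - (u * v' + u' * v) ^ 2 * f =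
          (u ^ 2 - v ^ 2 * f) * (u' ^ 2 - v' ^ 2 * f) := by ring
      rw [← this, h1, h2]; ring
    rcases mul_eq_zero.mp key with hc | hc
    · left
      by_contra hne
      refine norm_poly_ne_zero f hodd hf0 (fun hc2 => hne ?_) hc
      rw [hc2.1, hc2.2]; simp
    · right
      by_contra hne
      refine norm_poly_ne_zero f hodd hf0 (fun hc2 => hne ?_) hc
      rw [hc2.1, hc2.2]; simp
  letI : Nontrivial S := ⟨0, 1, nontrivS f⟩
  letI : NoZeroDivisors S := ⟨fun {a b} h => hnzd a b h⟩
  exact NoZeroDivisors.to_isDomain _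

/-- components of an element of `S` -/
noncomputable def cUV (z : S) : ℚ[X] × ℚ[X] :=
  ⟨(rep_ex f z).choose, (rep_ex f z).choose_spec.choose⟩

lemma cUV_spec (z : S) : z = ι (cUV f z).1 + ι (cUV f z).2 * yy :=
  (rep_ex f z).choose_spec.choose_spec

lemma cUV_eq {z : S} {u v : ℚ[X]} (h : z = ι u + ι v * yy) : cUV f z = (u, v) := by
  have h2 := cUV_spec f z
  rw [h] at h2
  obtain ⟨h3, h4⟩ := rep_unique f h2
  subst h
  exact Prod.ext h3.symm h4.symm

/-- the norm -/
noncomputable def Nrm (z : S) : ℚ[X] := (cUV f z).1 ^ 2 - (cUV f z).2 ^ 2 * f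

lemma Nrm_lin (u v : ℚ[X]) : Nrm f (ι u + ι v * yy) = u ^ 2 - v ^ 2 * f := by
  rw [Nrm, cUV_eq f rfl]

lemma Nrm_iota (u : ℚ[X]) : Nrm f (ι u) = u ^ 2 := by
  have : (ι u : S) = ι u + ι 0 * yy := by simp
  rw [this, Nrm_lin]; ring

lemma Nrm_mul (z w : S) : Nrm f (z * w) = Nrm f z * Nrm f w := by
  obtain ⟨u, v, hz⟩ := rep_ex f z
  obtain ⟨u', v', hw⟩ := rep_ex f w
  rw [hz, hw, mul_rep, Nrm_lin, Nrm_lin, Nrm_lin]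
  ring

lemma Nrm_eq_zero (hodd : Odd f.natDegree) (hf0 : f ≠ 0) {z : S} :
    Nrm f z = 0 ↔ z = 0 := by
  constructor
  · intro h
    obtain ⟨u, v, hz⟩ := rep_ex f z
    rw [hz, Nrm_lin] at h
    by_contra hne
    refine norm_poly_ne_zero f hodd hf0 (fun hc => hne ?_) h
    rw [hz, hc.1, hc.2]; simp
  · intro h; subst h
    have : (0 : S) = ι 0 + ι 0 * yy := by simp
    rw [this, Nrm_lin]; simp


/-- the Mumford ideal `(a, y - b)` -/
noncomputable def Idl (a b : ℚ[X]) : Ideal S := Ideal.span {ι a, yy - ι b}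

lemma mem_Idl {a b : ℚ[X]} (hdvd : a ∣ b ^ 2 - f) (z : S) :
    z ∈ Idl f a b ↔ ∃ α β : ℚ[X], z = ι (α * a) + ι β * (yy - ι b) := by
  obtain ⟨c, hc⟩ := hdvd
  have hcS : (ι b : S) ^ 2 - ι f = ι a * ι c := by
    have := congrArg (ι) hc
    simpa [map_sub, map_pow, map_mul] using this
  constructor
  · intro hz
    rw [Idl, Ideal.mem_span_pair] at hz
    obtain ⟨c1, c2, hz⟩ := hz
    obtain ⟨u1, v1, rfl⟩ := rep_ex f c1
    obtain ⟨u2, v2, rfl⟩ := rep_ex f c2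
    refine ⟨u1 + v1 * b - v2 * c, v1 * a + u2 - v2 * b, ?_⟩
    rw [← hz]
    simp only [map_add, map_mul, map_sub, map_neg, map_one, map_zero, map_pow]
    linear_combination (ι v2 : S) * ysq f - ι v2 * hcS
  · rintro ⟨α, β, rfl⟩
    rw [Idl, Ideal.mem_span_pair]
    exact ⟨ι α, ι β, by simp only [map_mul]⟩

lemma mem_Idl' {a b : ℚ[X]} (hdvd : a ∣ b ^ 2 - f) (z : S) :
    z ∈ Idl f a b ↔ ∃ α β : ℚ[X], z = ι (α * a - β * b) + ι β * yy := by
  rw [mem_Idl f hdvd]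
  constructor
  · rintro ⟨α, β, rfl⟩
    refine ⟨α, β, ?_⟩
    simp only [map_add, map_mul, map_sub, map_neg, map_one, map_zero]; ring
  · rintro ⟨α, β, rfl⟩
    refine ⟨α, β, ?_⟩
    simp only [map_add, map_mul, map_sub, map_neg, map_one, map_zero]; ring

lemma dvd_of_Idl_le {a b a' b' : ℚ[X]} (hv : a' ∣ b' ^ 2 - f)
    (hle : Idl f a b ≤ Idl f a' b') : a' ∣ a := by
  have ha : (ι a : S) ∈ Idl f a' b' := hle (Ideal.subset_span (by simp))
  rw [mem_Idl' f hv] at ha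
  obtain ⟨α, β, hab⟩ := ha
  rw [show (ι a : S) = ι a + ι 0 * yy by simp] at hab
  obtain ⟨e1, e2⟩ := rep_unique f hab
  exact ⟨α, by linear_combination e1 + b' * e2⟩

/-- reading off the pair from the ideal -/
lemma pair_eq_of_Idl_eq {a1 b1 a2 b2 : ℚ[X]} (h1m : a1.Monic) (h2m : a2.Monic)
    (h1d : b1.degree < a1.degree) (h2d : b2.degree < a2.degree)
    (h1v : a1 ∣ b1 ^ 2 - f) (h2v : a2 ∣ b2 ^ 2 - f)
    (h : Idl f a1 b1 = Idl f a2 b2) : a1 = a2 ∧ b1 = b2 := by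
  have hd12 : a2 ∣ a1 := dvd_of_Idl_le f h2v h.le
  have hd21 : a1 ∣ a2 := dvd_of_Idl_le f h1v h.ge
  have ha : a1 = a2 := Polynomial.eq_of_monic_of_associated h1m h2m
    (associated_of_dvd_dvd hd21 hd12)
  refine ⟨ha, ?_⟩
  have hy : (yy - ι b1 : S) ∈ Idl f a2 b2 := by
    rw [← h, Idl]; exact Ideal.subset_span (by simp)
  rw [mem_Idl' f h2v] at hy
  obtain ⟨α, β, hy⟩ := hy
  rw [show (yy - ι b1 : S) = ι (-b1) + ι 1 * yy by rw [map_neg, map_one]; ring] at hy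
  obtain ⟨e1, e2⟩ := rep_unique f hy
  have hdvd : a2 ∣ b2 - b1 := ⟨α, by linear_combination e1 + b2 * e2⟩
  have hdeg : (b2 - b1).degree < a2.degree := by
    refine lt_of_le_of_lt (degree_sub_le _ _) (max_lt h2d ?_)
    rw [← ha]; exact h1d
  have := Polynomial.eq_zero_of_dvd_of_degree_lt hdvd hdeg
  have : b2 = b1 := by linear_combination this
  exact this.symm


lemma norm_deg_lower {g : ℕ} (hdeg : f.natDegree = 2 * g + 1) (hm : f ≠ 0)
    {a b : ℚ[X]} (ha : a ≠ 0) (hag : a.natDegree ≤ g) (hdvd : a ∣ b ^ 2 - f)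
    {z : S} (hz : z ∈ Idl f a b) (hz0 : z ≠ 0) :
    2 * a.natDegree ≤ (Nrm f z).natDegree ∧
      ((Nrm f z).natDegree = 2 * a.natDegree →
        ∃ γ : ℚ[X], γ.natDegree = 0 ∧ z = ι (γ * a)) := by
  rw [mem_Idl' f hdvd] at hz
  obtain ⟨α, β, rfl⟩ := hz
  rw [Nrm_lin]
  set A := α * a - β * b with hA
  rcases eq_or_ne β 0 with hβ | hβ
  · subst hβ
    have hA0 : A ≠ 0 := fun h0 => hz0 (by rw [h0]; simp)
    have hα : α ≠ 0 := fun h0 => hA0 (by rw [hA, h0]; ring)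
    have hA' : A = α * a := by rw [hA]; ring
    have hNd : (A ^ 2 - 0 ^ 2 * f).natDegree = 2 * (α.natDegree + a.natDegree) := by
      rw [hA']
      have : (α * a) ^ 2 - (0:ℚ[X]) ^ 2 * f = (α * a) ^ 2 := by ring
      rw [this, natDegree_pow, natDegree_mul hα ha]
    rw [hNd]
    constructor
    · omega
    · intro he
      refine ⟨α, by omega, ?_⟩
      rw [hA, show α * a - 0 * b = α * a by ring]
      simp
  · -- β ≠ 0 : the norm has odd degree ≥ 2g+1 > 2 deg a
    have hβf : (β ^ 2 * f) ≠ 0 := mul_ne_zero (pow_ne_zero 2 hβ) hm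
    have hβfd : (β ^ 2 * f).natDegree = 2 * β.natDegree + (2 * g + 1) := by
      rw [natDegree_mul (pow_ne_zero 2 hβ) hm, natDegree_pow, hdeg]
    have hkey : 2 * g + 1 ≤ (A ^ 2 - β ^ 2 * f).natDegree := by
      rcases lt_trichotomy ((A ^ 2 : ℚ[X]).degree) ((β ^ 2 * f).degree) with hlt | heq | hgt
      · have : (A ^ 2 - β ^ 2 * f).natDegree = (β ^ 2 * f).natDegree := by
          apply natDegree_eq_of_degree_eq
          exact degree_sub_eq_right_of_degree_lt hlt
        omega
      · exfalso
        have hA0 : A ≠ 0 := by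
          intro h0
          rw [h0] at heq
          simp only [ne_eq, zero_pow, OfNat.ofNat_ne_zero, not_false_eq_true,
            degree_zero] at heq
          exact hβf (degree_eq_bot.mp heq.symm)
        have := natDegree_eq_of_degree_eq heq
        rw [natDegree_pow, hβfd] at this
        omega
      · have hsub : (A ^ 2 - β ^ 2 * f).natDegree = (A ^ 2).natDegree := by
          apply natDegree_eq_of_degree_eq
          exact degree_sub_eq_left_of_degree_lt hgt
        have hA0 : A ≠ 0 := by
          intro h0
          rw [h0] at hgt
          simp only [ne_eq, zero_pow, OfNat.ofNat_ne_zero, not_false_eq_true,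
            degree_zero] at hgt
          exact not_lt_bot hgt
        have hle : (β ^ 2 * f).natDegree ≤ (A ^ 2).natDegree :=
          natDegree_le_natDegree hgt.le
        rw [natDegree_pow] at *
        omega
    constructor
    · omega
    · intro he; omega

/-- The main uniqueness engine: two reduced Mumford ideals in the same class are equal. -/
lemma Idl_eq_of_ClassEq {g : ℕ} (hdeg : f.natDegree = 2 * g + 1) (hm : f ≠ 0)
    (hodd : Odd f.natDegree)
    {a1 b1 a2 b2 : ℚ[X]} (h1a : a1 ≠ 0) (h2a : a2 ≠ 0)
    (h1g : a1.natDegree ≤ g) (h2g : a2.natDegree ≤ g)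
    (h1v : a1 ∣ b1 ^ 2 - f) (h2v : a2 ∣ b2 ^ 2 - f)
    (h : ClassEq (Idl f a1 b1) (Idl f a2 b2)) : Idl f a1 b1 = Idl f a2 b2 := by
  letI : IsDomain S := sdomain f hodd hm
  obtain ⟨s, t, hs, ht, heq⟩ := h
  obtain ⟨us, vs, hsrep⟩ := rep_ex f s
  set σs : S := ι us + ι (-vs) * yy with hσ
  have hσs : σs * s = ι (us ^ 2 - vs ^ 2 * f) := by
    rw [hσ, hsrep, mul_rep]
    rw [show us * us + -vs * vs * f = us ^ 2 - vs ^ 2 * f by ring,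
      show us * vs + us * -vs = 0 by ring]
    simp
  set n : ℚ[X] := us ^ 2 - vs ^ 2 * f with hn
  have hσ0 : σs ≠ 0 := by
    intro h0
    obtain ⟨e1, e2⟩ := rep_zero f (by rw [← hσ]; exact h0)
    apply hs
    rw [hsrep, e1, show vs = 0 by linear_combination -e2]
    simp
  have hn0 : n ≠ 0 := by
    intro h0
    have : σs * s = 0 := by rw [hσs, h0, map_zero]
    rcases mul_eq_zero.mp this with h' | h'
    · exact hσ0 h'
    · exact hs h'
  set p : S := σs * t with hp
  have hp0 : p ≠ 0 := mul_ne_zero hσ0 ht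
  have key : Ideal.span {(ι n : S)} * Idl f a1 b1 = Ideal.span {p} * Idl f a2 b2 := by
    have := congrArg (fun I => Ideal.span {σs} * I) heq
    rw [← mul_assoc, ← mul_assoc, Ideal.span_singleton_mul_span_singleton,
      Ideal.span_singleton_mul_span_singleton, hσs] at this
    exact this
  -- Nrm basics
  have hNn : Nrm f (ι n : S) = n ^ 2 := Nrm_iota f n
  have hNp0 : Nrm f p ≠ 0 := fun h0 => hp0 ((Nrm_eq_zero f hodd hm).mp h0)
  -- step A
  have hmemA : (ι n : S) * ι a1 ∈ Ideal.span {p} * Idl f a2 b2 := by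
    rw [← key]
    exact Ideal.mul_mem_mul (Ideal.mem_span_singleton_self _)
      (Ideal.subset_span (by simp [Idl]))
  obtain ⟨q, hqI, hq⟩ := Ideal.mem_span_singleton_mul.mp hmemA
  have hq0 : q ≠ 0 := by
    rintro rfl
    rw [mul_zero] at hq
    have : n * a1 = 0 := by
      apply iota_inj f
      rw [map_mul, map_zero, ← hq]
    exact (mul_ne_zero hn0 h1a) this
  have hNq0 : Nrm f q ≠ 0 := fun h0 => hq0 ((Nrm_eq_zero f hodd hm).mp h0)
  have hdA : (Nrm f p).natDegree + (Nrm f q).natDegree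
      = 2 * n.natDegree + 2 * a1.natDegree := by
    have e : Nrm f p * Nrm f q = (n * a1) ^ 2 := by
      rw [← Nrm_mul, hq, ← map_mul, Nrm_iota]
    have := congrArg natDegree e
    rw [natDegree_mul hNp0 hNq0, natDegree_pow, natDegree_mul hn0 h1a] at this
    omega
  -- step B
  have hmemB : p * ι a2 ∈ Ideal.span {(ι n : S)} * Idl f a1 b1 := by
    rw [key]
    exact Ideal.mul_mem_mul (Ideal.mem_span_singleton_self _)
      (Ideal.subset_span (by simp [Idl]))
  obtain ⟨x, hxI, hx⟩ := Ideal.mem_span_singleton_mul.mp hmemB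
  have hx0 : x ≠ 0 := by
    rintro rfl
    rw [mul_zero] at hx
    exact (mul_ne_zero hp0 (fun h0 => h2a (by
      have : ι a2 = ι 0 := by rw [h0, map_zero]
      exact iota_inj f this))) hx.symm
  have hNx0 : Nrm f x ≠ 0 := fun h0 => hx0 ((Nrm_eq_zero f hodd hm).mp h0)
  have hdB : 2 * n.natDegree + (Nrm f x).natDegree
      = (Nrm f p).natDegree + 2 * a2.natDegree := by
    have e : n ^ 2 * Nrm f x = Nrm f p * a2 ^ 2 := by
      rw [← Nrm_iota f n, ← Nrm_mul, hx, Nrm_mul, Nrm_iota]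
    have := congrArg natDegree e
    rw [natDegree_mul (pow_ne_zero 2 hn0) hNx0,
      natDegree_mul hNp0 (pow_ne_zero 2 h2a), natDegree_pow, natDegree_pow] at this
    omega
  have hqlow := norm_deg_lower f hdeg hm h2a h2g h2v hqI hq0
  have hxlow := (norm_deg_lower f hdeg hm h1a h1g h1v hxI hx0).1
  have hqeq : (Nrm f q).natDegree = 2 * a2.natDegree := by omega
  obtain ⟨γ, hγd, hγ⟩ := hqlow.2 hqeq
  have hγ0 : γ ≠ 0 := by
    rintro rfl
    rw [zero_mul, map_zero] at hγ
    exact hq0 hγ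
  -- p is "real": p = ι up
  obtain ⟨up, vp, hprep⟩ := rep_ex f p
  have hcomp : ι (up * (γ * a2)) + ι (vp * (γ * a2)) * yy = ι (n * a1) + ι 0 * yy := by
    have : p * q = ι n * ι a1 := hq
    rw [hprep, hγ] at this
    rw [show (ι (γ * a2) : S) = ι (γ * a2) + ι 0 * yy by simp] at this
    rw [mul_rep] at this
    rw [show up * (γ * a2) + vp * 0 * f = up * (γ * a2) by ring,
      show up * 0 + γ * a2 * vp = vp * (γ * a2) by ring] at this
    rw [this, ← map_mul]
    simp
  obtain ⟨e1, e2⟩ := rep_unique f hcomp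
  have hvp : vp = 0 := by
    rcases mul_eq_zero.mp e2 with h' | h'
    · exact h'
    · exact absurd h' (mul_ne_zero hγ0 h2a)
  have hpup : p = ι up := by rw [hprep, hvp]; simp
  have hup0 : up ≠ 0 := by rintro rfl; rw [map_zero] at hpup; exact hp0 hpup
  -- now the projection argument : up ∣ n and n ∣ up
  have hupn : up ∣ n := by
    have hmem : (ι n : S) * (yy - ι b1) ∈ Ideal.span {p} * Idl f a2 b2 := by
      rw [← key]
      exact Ideal.mul_mem_mul (Ideal.mem_span_singleton_self _)
        (Ideal.subset_span (by simp [Idl]))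
    obtain ⟨w, hwI, hw⟩ := Ideal.mem_span_singleton_mul.mp hmem
    rw [mem_Idl' f h2v] at hwI
    obtain ⟨α, β, rfl⟩ := hwI
    rw [hpup] at hw
    have : ι (up * (α * a2 - β * b2)) + ι (up * β) * yy = ι (-(n * b1)) + ι n * yy := by
      rw [map_mul, map_mul]
      rw [show (ι (-(n*b1)) : S) + ι n * yy = ι n * (yy - ι b1) by
        rw [map_neg, map_mul]; ring]
      rw [← hw]; ring
    exact ⟨β, (rep_unique f this).2.symm⟩
  have hnup : n ∣ up := by
    have hmem : p * (yy - ι b2) ∈ Ideal.span {(ι n : S)} * Idl f a1 b1 := by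
      rw [key]
      exact Ideal.mul_mem_mul (Ideal.mem_span_singleton_self _)
        (Ideal.subset_span (by simp [Idl]))
    obtain ⟨w, hwI, hw⟩ := Ideal.mem_span_singleton_mul.mp hmem
    rw [mem_Idl' f h1v] at hwI
    obtain ⟨α, β, rfl⟩ := hwI
    rw [hpup] at hw
    have : ι (n * (α * a1 - β * b1)) + ι (n * β) * yy = ι (-(up * b2)) + ι up * yy := by
      rw [map_mul, map_mul]
      rw [show (ι (-(up*b2)) : S) + ι up * yy = ι up * (yy - ι b2) by
        rw [map_neg, map_mul]; ring]
      rw [← hw]; ring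
    exact ⟨β, (rep_unique f this).2.symm⟩
  -- n = up * C r with r ≠ 0
  obtain ⟨k, hk⟩ := hupn
  obtain ⟨l, hl⟩ := hnup
  have hkl : k * l = 1 := by
    have h2 : n * (k * l) = n * 1 := by linear_combination -hk - k * hl
    exact mul_left_cancel₀ hn0 h2
  have hkunit : IsUnit k := ⟨⟨k, l, hkl, by rw [mul_comm]; exact hkl⟩, rfl⟩
  obtain ⟨r, hr, hCr⟩ := Polynomial.isUnit_iff.mp hkunit
  have hr0 : r ≠ 0 := by rintro rfl; simp at hr
  -- conclude I1 = I2
  have hni : (ι n : S) = ι up * ι (C r) := by rw [← map_mul, hCr, ← hk]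
  apply le_antisymm
  · intro z hz
    have hmem : (ι n : S) * z ∈ Ideal.span {p} * Idl f a2 b2 := by
      rw [← key]
      exact Ideal.mul_mem_mul (Ideal.mem_span_singleton_self _) hz
    obtain ⟨w, hwI, hw⟩ := Ideal.mem_span_singleton_mul.mp hmem
    rw [hpup] at hw
    have hzr : z = ι (C r⁻¹) * w := by
      have h1 : ι up * w = ι up * (ι (C r) * z) := by
        rw [hw, hni]; ring
      have h2 : w = ι (C r) * z := mul_left_cancel₀ (fun h0 => hup0 (iota_inj f (by rw [h0, map_zero]))) h1
      rw [h2, ← mul_assoc, ← map_mul, ← C_mul, inv_mul_cancel₀ hr0, C_1, map_one, one_mul]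
    rw [hzr]
    exact Ideal.mul_mem_left _ _ hwI
  · intro z hz
    have hmem : (ι up : S) * z ∈ Ideal.span {(ι n : S)} * Idl f a1 b1 := by
      rw [key, ← hpup]
      exact Ideal.mul_mem_mul (Ideal.mem_span_singleton_self _) hz
    obtain ⟨w, hwI, hw⟩ := Ideal.mem_span_singleton_mul.mp hmem
    have hzr : z = ι (C r) * w := by
      have h1 : ι up * (ι (C r) * w) = ι up * z := by
        rw [← mul_assoc, ← hni, hw]
      exact (mul_left_cancel₀ (fun h0 => hup0 (iota_inj f (by rw [h0, map_zero]))) h1).symm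
    rw [hzr]
    exact Ideal.mul_mem_left _ _ hwI


lemma ClassEq_refl (I : Ideal S) : ClassEq I I :=
  ⟨1, 1, fun h => nontrivS f h.symm, fun h => nontrivS f h.symm, rfl⟩

lemma ClassEq_symm {I J : Ideal S} (h : ClassEq I J) : ClassEq J I := by
  obtain ⟨s, t, hs, ht, he⟩ := h
  exact ⟨t, s, ht, hs, he.symm⟩

lemma ClassEq_trans (hodd : Odd f.natDegree) (hm : f ≠ 0) {I J K : Ideal S}
    (h1 : ClassEq I J) (h2 : ClassEq J K) : ClassEq I K := by
  letI : IsDomain S := sdomain f hodd hm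
  obtain ⟨s1, t1, hs1, ht1, he1⟩ := h1
  obtain ⟨s2, t2, hs2, ht2, he2⟩ := h2
  refine ⟨s2 * s1, t1 * t2, mul_ne_zero hs2 hs1, mul_ne_zero ht1 ht2, ?_⟩
  rw [← Ideal.span_singleton_mul_span_singleton, ← Ideal.span_singleton_mul_span_singleton,
    mul_assoc, he1, ← mul_assoc, mul_comm (Ideal.span {s2}) (Ideal.span {t1}),
    mul_assoc, he2, ← mul_assoc]

lemma unit_combo (hsf : Squarefree f) {a b c : ℚ[X]} (hc : b ^ 2 - f = a * c) :
    Ideal.span {a, c, b, f} = (⊤ : Ideal ℚ[X]) := by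
  by_contra hne
  obtain ⟨M, hM, hle⟩ := Ideal.exists_le_maximal _ hne
  obtain ⟨π, hπ⟩ := IsPrincipalIdealRing.principal M
  have hgen : ∀ x : ℚ[X], x ∈ Ideal.span {a, c, b, f} → π ∣ x := by
    intro x hx
    have hx2 := hle hx
    rw [hπ] at hx2
    exact Ideal.mem_span_singleton.mp hx2
  have hπa : π ∣ a := hgen a (Ideal.subset_span (by simp))
  have hπc : π ∣ c := hgen c (Ideal.subset_span (by simp))
  have hπb : π ∣ b := hgen b (Ideal.subset_span (by simp))
  have hππ : π * π ∣ f := by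
    have h1 : π * π ∣ b ^ 2 := by
      obtain ⟨w, hw⟩ := hπb
      exact ⟨w * w, by rw [hw]; ring⟩
    have h2 : π * π ∣ a * c := mul_dvd_mul hπa hπc
    have h3 : f = b ^ 2 - a * c := by linear_combination -hc
    rw [h3]
    exact dvd_sub h1 h2
  have hu := hsf π hππ
  have : M = ⊤ := by rw [hπ]; exact Ideal.span_singleton_eq_top.mpr hu
  exact hM.ne_top this

lemma gen_mem_Idl₁ (a b : ℚ[X]) : (ι a : S) ∈ Idl f a b :=
  Ideal.subset_span (by simp)

lemma gen_mem_Idl₂ (a b : ℚ[X]) : (yy - ι b : S) ∈ Idl f a b :=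
  Ideal.subset_span (by simp)

lemma iotaC2 : (ι (C (2:ℚ)) : S) = 2 := by
  have h1 : (C (2:ℚ)) = (2:ℚ[X]) := by
    have := map_ofNat (C : ℚ →+* ℚ[X]) 2
    simpa using this
  rw [h1, map_ofNat]

lemma iotaC2inv : (ι (C (2⁻¹:ℚ)) : S) * 2 = 1 := by
  rw [← iotaC2 f, ← map_mul, ← C_mul]
  norm_num

lemma hacs {a b c : ℚ[X]} (hc : b ^ 2 - f = a * c) :
    (ι a : S) * ι c = ι b ^ 2 - ι f := by
  rw [← map_mul, ← hc, map_sub, map_pow]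

lemma prod_span_le {a b c : ℚ[X]} (hc : b ^ 2 - f = a * c) :
    Idl f a b * Idl f c b ≤ Ideal.span {(yy - ι b : S)} := by
  have hc2 : c ∣ b ^ 2 - f := ⟨a, by linear_combination hc⟩
  have hy2 := ysq f
  have hACS := hacs f hc
  refine Ideal.mul_le.mpr (fun r hr s hs => ?_)
  rw [mem_Idl f ⟨c, hc⟩] at hr
  rw [mem_Idl f hc2] at hs
  obtain ⟨α, β, rfl⟩ := hr
  obtain ⟨α', β', rfl⟩ := hs
  rw [Ideal.mem_span_singleton]
  refine ⟨ι (α * α') * (-(yy + ι b)) + ι (α * a) * ι β' + ι β * ι (α' * c)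
    + ι β * ι β' * (yy - ι b), ?_⟩
  simp only [map_mul, map_add, map_sub, map_neg, map_one, map_zero, map_pow]
  linear_combination (ι α * ι α' : S) * hy2 + ι α * ι α' * hACS

lemma mem_prod_aux {a b c : ℚ[X]} (hc : b ^ 2 - f = a * c) :
    ((ι a : S) * (yy - ι b) ∈ Idl f a b * Idl f c b) ∧
    ((ι c : S) * (yy - ι b) ∈ Idl f a b * Idl f c b) ∧
    ((ι b : S) * (yy - ι b) ∈ Idl f a b * Idl f c b) ∧
    ((ι f : S) * (yy - ι b) ∈ Idl f a b * Idl f c b) := by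
  have hy2 := ysq f
  have hac : (ι a : S) * ι c ∈ Idl f a b * Idl f c b :=
    Ideal.mul_mem_mul (gen_mem_Idl₁ f a b) (gen_mem_Idl₁ f c b)
  have hay : (ι a : S) * (yy - ι b) ∈ Idl f a b * Idl f c b :=
    Ideal.mul_mem_mul (gen_mem_Idl₁ f a b) (gen_mem_Idl₂ f c b)
  have hcy : (ι c : S) * (yy - ι b) ∈ Idl f a b * Idl f c b := by
    have h1 := Ideal.mul_mem_mul (gen_mem_Idl₂ f a b) (gen_mem_Idl₁ f c b)
    have h2 : (ι c : S) * (yy - ι b) = (yy - ι b) * ι c := mul_comm _ _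
    rw [h2]; exact h1
  have hyy : (yy - ι b : S) * (yy - ι b) ∈ Idl f a b * Idl f c b :=
    Ideal.mul_mem_mul (gen_mem_Idl₂ f a b) (gen_mem_Idl₂ f c b)
  have hyyb : (yy : S) * (yy - ι b) ∈ Idl f a b * Idl f c b := by
    have hdouble : (2 : S) * (yy * (yy - ι b)) = (yy - ι b) * (yy - ι b) - ι a * ι c := by
      rw [hacs f hc]; linear_combination hy2
    have hid : (yy : S) * (yy - ι b) =
        ι (C (2⁻¹ : ℚ)) * ((yy - ι b) * (yy - ι b) - ι a * ι c) := by
      rw [← hdouble, ← mul_assoc, iotaC2inv, one_mul]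
    rw [hid]
    exact Ideal.mul_mem_left _ _ (Ideal.sub_mem _ hyy hac)
  refine ⟨hay, hcy, ?_, ?_⟩
  · have hid : (ι b : S) * (yy - ι b) = yy * (yy - ι b) - (yy - ι b) * (yy - ι b) := by ring
    rw [hid]
    exact Ideal.sub_mem _ hyyb hyy
  · have hid : (ι f : S) * (yy - ι b) = yy * (yy * (yy - ι b)) := by
      linear_combination (ι b - yy : S) * hy2
    rw [hid]
    exact Ideal.mul_mem_left _ _ hyyb

lemma IdlA (hsf : Squarefree f) {a b c : ℚ[X]} (hc : b ^ 2 - f = a * c) :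
    Idl f a b * Idl f c b = Ideal.span {(yy - ι b : S)} := by
  refine le_antisymm (prod_span_le f hc) ?_
  rw [Ideal.span_le]
  rintro z hz
  rw [Set.mem_singleton_iff] at hz
  subst hz
  obtain ⟨h1, h2, h3, h4⟩ := mem_prod_aux f hc
  have key : ∀ x : ℚ[X], x ∈ Ideal.span {a, c, b, f} →
      (ι x : S) * (yy - ι b) ∈ Idl f a b * Idl f c b := by
    intro x hx
    induction hx using Submodule.span_induction with
    | mem x hx =>
      simp only [Set.mem_insert_iff, Set.mem_singleton_iff] at hx
      rcases hx with rfl | rfl | rfl | rfl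
      exacts [h1, h2, h3, h4]
    | zero => simp only [map_zero, zero_mul]; exact Ideal.zero_mem _
    | add x y hx hy ihx ihy =>
      rw [map_add, add_mul]
      exact Ideal.add_mem _ ihx ihy
    | smul r x hx ihx =>
      rw [smul_eq_mul, map_mul, mul_assoc]
      exact Ideal.mul_mem_left _ _ ihx
  have h1top : (1 : ℚ[X]) ∈ Ideal.span {a, c, b, f} := by
    rw [unit_combo f hsf hc]; trivial
  have := key 1 h1top
  rwa [map_one, one_mul] at this

lemma IdlB (hsf : Squarefree f) {a b c : ℚ[X]} (hc : b ^ 2 - f = a * c) :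
    Idl f c b * Idl f c (-b) = Ideal.span {(ι c : S)} := by
  have hy2 := ysq f
  have hACS := hacs f hc
  have hc2 : c ∣ b ^ 2 - f := ⟨a, by linear_combination hc⟩
  have hc2' : c ∣ (-b) ^ 2 - f := ⟨a, by linear_combination hc⟩
  refine le_antisymm ?_ ?_
  · refine Ideal.mul_le.mpr (fun r hr s hs => ?_)
    rw [mem_Idl f hc2] at hr
    rw [mem_Idl f hc2'] at hs
    obtain ⟨α, β, rfl⟩ := hr
    obtain ⟨α', β', rfl⟩ := hs
    rw [Ideal.mem_span_singleton]
    refine ⟨ι (α * α' * c) + ι (α * β') * (yy + ι b) + ι (β * α') * (yy - ι b)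
      - ι (β * β' * a), ?_⟩
    simp only [map_mul, map_add, map_sub, map_neg, map_one, map_zero, map_pow]
    linear_combination (ι β * ι β' : S) * hy2 + ι β * ι β' * hACS
  · rw [Ideal.span_le]
    rintro z hz
    rw [Set.mem_singleton_iff] at hz
    subst hz
    have g1 : (ι c : S) ∈ Idl f c b := gen_mem_Idl₁ f c b
    have g2 : (yy - ι b : S) ∈ Idl f c b := gen_mem_Idl₂ f c b
    have g1' : (ι c : S) ∈ Idl f c (-b) := gen_mem_Idl₁ f c (-b)
    have g2' : (yy + ι b : S) ∈ Idl f c (-b) := by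
      have := gen_mem_Idl₂ f c (-b)
      rwa [map_neg, sub_neg_eq_add] at this
    have hcc : (ι c : S) * ι c ∈ Idl f c b * Idl f c (-b) := Ideal.mul_mem_mul g1 g1'
    have hcyp : (ι c : S) * (yy + ι b) ∈ Idl f c b * Idl f c (-b) := Ideal.mul_mem_mul g1 g2'
    have hcym : (ι c : S) * (yy - ι b) ∈ Idl f c b * Idl f c (-b) := by
      have h1 := Ideal.mul_mem_mul g2 g1'
      have h2 : (ι c : S) * (yy - ι b) = (yy - ι b) * ι c := mul_comm _ _
      rw [h2]; exact h1
    have hca : (ι c : S) * ι a ∈ Idl f c b * Idl f c (-b) := by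
      have h2 : (ι c : S) * ι a = -((yy - ι b) * (yy + ι b)) := by
        linear_combination hy2 + hACS
      rw [h2]
      exact neg_mem (Ideal.mul_mem_mul g2 g2')
    have hcb : (ι c : S) * ι b ∈ Idl f c b * Idl f c (-b) := by
      have h2 : (ι c : S) * ι b =
          ι (C (2⁻¹ : ℚ)) * (ι c * (yy + ι b) - ι c * (yy - ι b)) := by
        have h3 : (ι c : S) * (yy + ι b) - ι c * (yy - ι b) = 2 * (ι c * ι b) := by ring
        rw [h3, ← mul_assoc, iotaC2inv, one_mul]
      rw [h2]
      exact Ideal.mul_mem_left _ _ (Ideal.sub_mem _ hcyp hcym)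
    have hcyy : (ι c : S) * yy ∈ Idl f c b * Idl f c (-b) := by
      have h2 : (ι c : S) * yy =
          ι (C (2⁻¹ : ℚ)) * (ι c * (yy + ι b) + ι c * (yy - ι b)) := by
        have h3 : (ι c : S) * (yy + ι b) + ι c * (yy - ι b) = 2 * (ι c * yy) := by ring
        rw [h3, ← mul_assoc, iotaC2inv, one_mul]
      rw [h2]
      exact Ideal.mul_mem_left _ _ (Ideal.add_mem _ hcyp hcym)
    have hcf : (ι c : S) * ι f ∈ Idl f c b * Idl f c (-b) := by
      have h2 : (ι c : S) * ι f = yy * (ι c * yy) := by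
        linear_combination (-(ι c) : S) * hy2
      rw [h2]
      exact Ideal.mul_mem_left _ _ hcyy
    have key : ∀ x : ℚ[X], x ∈ Ideal.span {a, c, b, f} →
        (ι c : S) * ι x ∈ Idl f c b * Idl f c (-b) := by
      intro x hx
      induction hx using Submodule.span_induction with
      | mem x hx =>
        simp only [Set.mem_insert_iff, Set.mem_singleton_iff] at hx
        rcases hx with rfl | rfl | rfl | rfl
        exacts [hca, hcc, hcb, hcf]
      | zero => simp only [map_zero, mul_zero]; exact Ideal.zero_mem _
      | add x y hx hy ihx ihy =>
        rw [map_add, mul_add]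
        exact Ideal.add_mem _ ihx ihy
      | smul r x hx ihx =>
        rw [smul_eq_mul, map_mul, show (ι c : S) * (ι r * ι x) = ι r * (ι c * ι x) by ring]
        exact Ideal.mul_mem_left _ _ ihx
    have h1top : (1 : ℚ[X]) ∈ Ideal.span {a, c, b, f} := by
      rw [unit_combo f hsf hc]; trivial
    have := key 1 h1top
    rwa [map_one, mul_one] at this

lemma Idl_normalize {a b : ℚ[X]} (ha : a ≠ 0) (hdvd : a ∣ b ^ 2 - f) :
    ∃ a' b' : ℚ[X], a'.Monic ∧ b'.degree < a'.degree ∧ a' ∣ b' ^ 2 - f ∧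
      a'.natDegree = a.natDegree ∧ Idl f a' b' = Idl f a b := by
  set a' := a * C a.leadingCoeff⁻¹ with ha'
  have hlc : a.leadingCoeff ≠ 0 := leadingCoeff_ne_zero.mpr ha
  have hm' : a'.Monic := monic_mul_leadingCoeff_inv ha
  set q := b /ₘ a' with hqdef
  set b' := b %ₘ a' with hb'
  have hbq : b' = b - a' * q := modByMonic_eq_sub_mul_div b a'
  have hdeg' : b'.degree < a'.degree := degree_modByMonic_lt b hm'
  have ha'a : a' ∣ a := ⟨C a.leadingCoeff, by
    rw [ha', mul_assoc, ← C_mul, inv_mul_cancel₀ hlc, C_1, mul_one]⟩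
  have haa' : a ∣ a' := ⟨C a.leadingCoeff⁻¹, rfl⟩
  obtain ⟨e, he⟩ := dvd_trans ha'a hdvd
  have hdvd' : a' ∣ b' ^ 2 - f := ⟨e - 2 * b * q + a' * q ^ 2, by
    rw [hbq]; linear_combination he⟩
  have hnd : a'.natDegree = a.natDegree := by
    rw [ha', natDegree_mul ha (C_ne_zero.mpr (inv_ne_zero hlc)), natDegree_C]
    omega
  refine ⟨a', b', hm', hdeg', hdvd', hnd, ?_⟩
  have hsub1 : Idl f a' b' ≤ Idl f a b := by
    rw [Idl, Ideal.span_le]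
    rintro z hz
    simp only [Set.mem_insert_iff, Set.mem_singleton_iff] at hz
    rcases hz with rfl | rfl
    · have : (ι a' : S) = ι (C a.leadingCoeff⁻¹) * ι a := by
        rw [← map_mul, ha', mul_comm]
      rw [this]
      exact Ideal.mul_mem_left _ _ (gen_mem_Idl₁ f a b)
    · have : (yy - ι b' : S) = (yy - ι b) + ι (C a.leadingCoeff⁻¹ * q) * ι a := by
        have h6 : b - b' = (C a.leadingCoeff⁻¹ * q) * a := by rw [hbq, ha']; ring
        have h5 := congrArg (ι) h6
        simp only [map_sub, map_mul] at h5
        simp only [map_mul]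
        linear_combination h5
      rw [this]
      exact Ideal.add_mem _ (gen_mem_Idl₂ f a b)
        (Ideal.mul_mem_left _ _ (gen_mem_Idl₁ f a b))
  have hsub2 : Idl f a b ≤ Idl f a' b' := by
    rw [Idl, Ideal.span_le]
    rintro z hz
    simp only [Set.mem_insert_iff, Set.mem_singleton_iff] at hz
    rcases hz with rfl | rfl
    · have : (ι a : S) = ι (C a.leadingCoeff) * ι a' := by
        rw [← map_mul]
        congr 1
        rw [ha', mul_comm (C a.leadingCoeff), mul_assoc, ← C_mul, inv_mul_cancel₀ hlc,
          C_1, mul_one]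
      rw [this]
      exact Ideal.mul_mem_left _ _ (gen_mem_Idl₁ f a' b')
    · have : (yy - ι b : S) = (yy - ι b') - ι q * ι a' := by
        rw [hbq, map_sub, map_mul]
        ring
      rw [this]
      exact Ideal.sub_mem _ (gen_mem_Idl₂ f a' b')
        (Ideal.mul_mem_left _ _ (gen_mem_Idl₁ f a' b'))
  exact le_antisymm hsub1 hsub2

lemma reduce {g : ℕ} (hg : 1 ≤ g) (hdeg : f.natDegree = 2 * g + 1) (hm : f.Monic)
    (hodd : Odd f.natDegree) (hsf : Squarefree f) :
    ∀ N : ℕ, ∀ a b : ℚ[X], a.natDegree ≤ N → a.Monic → b.degree < a.degree →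
      a ∣ b ^ 2 - f →
      ∃ a' b', a'.Monic ∧ b'.degree < a'.degree ∧ a'.natDegree ≤ g ∧
        a' ∣ b' ^ 2 - f ∧ ClassEq (Idl f a b) (Idl f a' b') := by
  have hf0 : f ≠ 0 := hm.ne_zero
  intro N
  induction N with
  | zero =>
    intro a b hN hmon hdb hdvd
    exact ⟨a, b, hmon, hdb, by omega, hdvd, ClassEq_refl f _⟩
  | succ N ih =>
    intro a b hN hmon hdb hdvd
    by_cases hle : a.natDegree ≤ g
    · exact ⟨a, b, hmon, hdb, hle, hdvd, ClassEq_refl f _⟩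
    push_neg at hle
    have hbf : b ^ 2 - f ≠ 0 := by
      intro h0
      have hfb : f = b ^ 2 := by linear_combination -h0
      have : f.natDegree = 2 * b.natDegree := by rw [hfb, natDegree_pow]
      omega
    obtain ⟨c, hc⟩ := hdvd
    have hc0 : c ≠ 0 := by rintro rfl; rw [mul_zero] at hc; exact hbf hc
    have hdegsum : (b ^ 2 - f).natDegree = a.natDegree + c.natDegree := by
      rw [hc, natDegree_mul hmon.ne_zero hc0]
    have hbub : (b ^ 2 - f).natDegree ≤ 2 * a.natDegree - 1 := by
      have h1 := natDegree_sub_le (b ^ 2) f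
      rw [natDegree_pow, hdeg] at h1
      rcases eq_or_ne b 0 with rfl | hb0
      · simp only [natDegree_zero, mul_zero, Nat.zero_max] at h1
        omega
      · have hblt := natDegree_lt_natDegree hb0 hdb
        have h3 : 2 * b.natDegree ⊔ (2 * g + 1) ≤ 2 * a.natDegree - 1 :=
          sup_le (by omega) (by omega)
        have h4 := le_trans h1 h3
        omega
    have hcN : c.natDegree ≤ N := by omega
    have hcdvd : c ∣ (-b) ^ 2 - f := ⟨a, by linear_combination hc⟩
    -- the class equivalence step
    have hA := IdlA f hsf hc
    have hB := IdlB f hsf hc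
    have hclaim : Ideal.span {(ι c : S)} * Idl f a b
        = Ideal.span {(yy - ι b : S)} * Idl f c (-b) := by
      rw [← hA, ← hB]
      ring
    have hιc0 : (ι c : S) ≠ 0 := fun h0 => hc0 (iota_inj f (by rw [h0, map_zero]))
    have hyb0 : (yy - ι b : S) ≠ 0 := by
      intro h0
      have : (ι (-b) : S) + ι 1 * yy = 0 := by
        rw [map_neg, map_one]; linear_combination h0
      exact one_ne_zero ((rep_zero f this).2)
    have hstep : ClassEq (Idl f a b) (Idl f c (-b)) := ⟨_, _, hιc0, hyb0, hclaim⟩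
    obtain ⟨a₁, b₁, hm₁, hd₁, hv₁, hn₁, hI₁⟩ := Idl_normalize f hc0 hcdvd
    obtain ⟨a', b', hm', hd', hg', hv', hce⟩ := ih a₁ b₁ (by omega) hm₁ hd₁ hv₁
    refine ⟨a', b', hm', hd', hg', hv', ?_⟩
    have hstep₁ : ClassEq (Idl f a b) (Idl f a₁ b₁) := by rw [hI₁]; exact hstep
    exact ClassEq_trans f hodd hf0 hstep₁ hce

lemma initial_form (hodd : Odd f.natDegree) (hf0 : f ≠ 0) {J : Ideal S} (hJ : J ≠ ⊥) :
    ∃ a b : ℚ[X], a ≠ 0 ∧ a ∣ b ^ 2 - f ∧ ClassEq J (Idl f a b) := by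
  have hy2 := ysq f
  -- the ideal of y-components
  let Iv : Ideal ℚ[X] :=
  { carrier := {v | ∃ u, (ι u + ι v * yy : S) ∈ J}
    zero_mem' := ⟨0, by simpa using J.zero_mem⟩
    add_mem' := by
      rintro v1 v2 ⟨u1, h1⟩ ⟨u2, h2⟩
      refine ⟨u1 + u2, ?_⟩
      have h3 := J.add_mem h1 h2
      have h4 : (ι (u1 + u2) + ι (v1 + v2) * yy : S)
          = (ι u1 + ι v1 * yy) + (ι u2 + ι v2 * yy) := by
        rw [map_add, map_add]; ring
      rw [h4]; exact h3
    smul_mem' := by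
      rintro r v ⟨u, h⟩
      refine ⟨r * u, ?_⟩
      have h2 := J.mul_mem_left (ι r) h
      have h4 : (ι (r * u) + ι (r • v) * yy : S) = ι r * (ι u + ι v * yy) := by
        rw [smul_eq_mul, map_mul, map_mul]; ring
      rw [h4]; exact h2 }
  have memIv : ∀ v : ℚ[X], v ∈ Iv ↔ ∃ u, (ι u + ι v * yy : S) ∈ J := fun v => Iff.rfl
  obtain ⟨c, hc⟩ := (IsPrincipalIdealRing.principal Iv).principal
  obtain ⟨d, hd⟩ := (IsPrincipalIdealRing.principal (Ideal.comap (ι) J)).principal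
  have hdvd_c : ∀ v ∈ Iv, c ∣ v := by
    intro v hv
    rw [hc] at hv
    exact Ideal.mem_span_singleton.mp hv
  have hdvd_d : ∀ u : ℚ[X], (ι u : S) ∈ J → d ∣ u := by
    intro u hu
    have : u ∈ Ideal.comap (ι) J := Ideal.mem_comap.mpr hu
    rw [hd] at this
    exact Ideal.mem_span_singleton.mp this
  have hdJ : (ι d : S) ∈ J := by
    have : d ∈ Ideal.comap (ι) J := by rw [hd]; exact Ideal.mem_span_singleton_self d
    exact Ideal.mem_comap.mp this
  -- nonzero element
  obtain ⟨z, hzJ, hz0⟩ := (Submodule.ne_bot_iff J).mp hJ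
  obtain ⟨u, v, rfl⟩ := rep_ex f z
  -- d ≠ 0
  have hnrm : ((ι u + ι v * yy : S) * (ι u - ι v * yy) : S) = ι (u ^ 2 - v ^ 2 * f) := by
    simp only [map_sub, map_mul, map_pow]
    linear_combination (-(ι v * ι v) : S) * hy2
  have hnJ : (ι (u ^ 2 - v ^ 2 * f) : S) ∈ J := by
    rw [← hnrm]; exact J.mul_mem_right _ hzJ
  have hn0 : u ^ 2 - v ^ 2 * f ≠ 0 := by
    apply norm_poly_ne_zero f hodd hf0
    rintro ⟨rfl, rfl⟩
    simp at hz0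
  have hd0 : d ≠ 0 := by
    rintro rfl
    have := hdvd_d _ hnJ
    rw [zero_dvd_iff] at this
    exact hn0 this
  -- c ≠ 0
  have hc0 : c ≠ 0 := by
    rintro rfl
    have hyz : (yy * (ι u + ι v * yy) : S) ∈ J := J.mul_mem_left _ hzJ
    have h4 : (yy * (ι u + ι v * yy) : S) = ι (v * f) + ι u * yy := by
      simp only [map_mul]
      linear_combination (ι v : S) * hy2
    rw [h4] at hyz
    have hu : u ∈ Iv := ⟨v * f, hyz⟩
    have hv : v ∈ Iv := ⟨u, hzJ⟩
    have hu0 := zero_dvd_iff.mp (hdvd_c u hu)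
    have hv0 := zero_dvd_iff.mp (hdvd_c v hv)
    rw [hu0, hv0] at hz0
    simp at hz0
  -- the element ξ
  obtain ⟨u₀, hξ⟩ : ∃ u₀, (ι u₀ + ι c * yy : S) ∈ J := by
    have : c ∈ Iv := by rw [hc]; exact Ideal.mem_span_singleton_self c
    exact this
  -- c ∣ u₀
  have hyξ : (ι (c * f) + ι u₀ * yy : S) ∈ J := by
    have h5 := J.mul_mem_left yy hξ
    have h4 : (yy * (ι u₀ + ι c * yy) : S) = ι (c * f) + ι u₀ * yy := by
      simp only [map_mul]
      linear_combination (ι c : S) * hy2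
    rwa [h4] at h5
  obtain ⟨b₀, hb₀⟩ : c ∣ u₀ := hdvd_c u₀ ⟨c * f, hyξ⟩
  -- c ∣ d
  obtain ⟨a₀, ha₀⟩ : c ∣ d := by
    apply hdvd_c
    refine ⟨0, ?_⟩
    have h5 := J.mul_mem_left yy hdJ
    have h4 : (yy * ι d : S) = ι 0 + ι d * yy := by rw [map_zero]; ring
    rwa [h4] at h5
  have ha₀0 : a₀ ≠ 0 := by rintro rfl; rw [mul_zero] at ha₀; exact hd0 ha₀
  -- a₀ ∣ b₀² - f
  have hfa : a₀ ∣ (-b₀) ^ 2 - f := by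
    have hbS : (ι u₀ : S) = ι c * ι b₀ := by rw [← map_mul, ← hb₀]
    have hsubJ : (ι (c * f - b₀ * u₀) : S) ∈ J := by
      have h5 := J.sub_mem hyξ (J.mul_mem_left (ι b₀) hξ)
      have h4 : (ι (c * f) + ι u₀ * yy : S) - ι b₀ * (ι u₀ + ι c * yy)
          = ι (c * f - b₀ * u₀) := by
        simp only [map_sub, map_mul]
        linear_combination (yy : S) * hbS
      rwa [h4] at h5
    have h6 : d ∣ c * f - b₀ * u₀ := hdvd_d _ hsubJ
    have h7 : c * a₀ ∣ c * (f - b₀ ^ 2) := by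
      rw [← ha₀]
      have : c * (f - b₀ ^ 2) = c * f - b₀ * u₀ := by rw [hb₀]; ring
      rw [this]; exact h6
    have h8 : a₀ ∣ f - b₀ ^ 2 := (mul_dvd_mul_iff_left hc0).mp h7
    obtain ⟨w, hw⟩ := h8
    exact ⟨-w, by linear_combination -hw⟩
  -- J = (c) * Idl f a₀ (-b₀)
  have hJeq : J = Ideal.span {(ι c : S)} * Idl f a₀ (-b₀) := by
    apply le_antisymm
    · intro z hzJ'
      obtain ⟨u', v', rfl⟩ := rep_ex f z
      obtain ⟨β, hβ⟩ : c ∣ v' := hdvd_c v' ⟨u', hzJ'⟩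
      have h5 : (ι u' + ι v' * yy : S) - ι β * (ι u₀ + ι c * yy) = ι (u' - β * u₀) := by
        simp only [map_sub, map_mul]
        have hβS : (ι v' : S) = ι c * ι β := by rw [← map_mul, ← hβ]
        linear_combination (yy : S) * hβS
      have h6 : (ι (u' - β * u₀) : S) ∈ J := by
        rw [← h5]; exact J.sub_mem hzJ' (J.mul_mem_left _ hξ)
      obtain ⟨α, hα⟩ : d ∣ u' - β * u₀ := hdvd_d _ h6
      rw [Ideal.mem_span_singleton_mul]
      refine ⟨ι (α * a₀) + ι β * (yy - ι (-b₀)), (mem_Idl f hfa _).mpr ⟨α, β, rfl⟩, ?_⟩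
      have h7 : c * (α * a₀ + β * b₀) = u' := by
        have h8 : u' - β * u₀ = c * a₀ * α := by rw [hα, ha₀]
        linear_combination -h8 - β * hb₀
      have h9 : (ι c : S) * (ι (α * a₀) + ι β * (yy - ι (-b₀)))
          = ι (c * (α * a₀ + β * b₀)) + ι (c * β) * yy := by
        simp only [map_mul, map_add, map_neg, map_sub]
        ring
      rw [h9, h7, ← hβ]
    · intro z hz
      rw [Ideal.mem_span_singleton_mul] at hz
      obtain ⟨w, hwI, rfl⟩ := hz
      rw [mem_Idl f hfa] at hwI
      obtain ⟨α, β, rfl⟩ := hwI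
      have h4 : (ι c : S) * (ι (α * a₀) + ι β * (yy - ι (-b₀)))
          = ι α * ι d + ι β * (ι u₀ + ι c * yy) := by
        have hbS : (ι u₀ : S) = ι c * ι b₀ := by rw [← map_mul, ← hb₀]
        have hdS : (ι d : S) = ι c * ι a₀ := by rw [← map_mul, ← ha₀]
        simp only [map_mul, map_add, map_neg, map_sub]
        linear_combination (-(ι β) : S) * hbS - ι α * hdS
      rw [h4]
      exact J.add_mem (J.mul_mem_left _ hdJ) (J.mul_mem_left _ hξ)
  refine ⟨a₀, -b₀, ha₀0, hfa, 1, ι c, fun h => nontrivS f h.symm,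
    fun h0 => hc0 (iota_inj f (by rw [h0, map_zero])), ?_⟩
  rw [Ideal.span_singleton_one, Ideal.top_mul]
  exact hJeq

end Mumford
end MumfordAux

/-- Mumford representation.  Let `f ∈ ℚ[X]` be square-free monic of
degree `2g+1`, `g ≥ 1`, and `S = ℚ[X,Y]/(Y² - f)`.  Every element of the class group of
`S` (i.e. the class of any invertible ideal `J` of `S`) is the class of the ideal
`(a, y - b)` for a unique pair `(a, b)` with `a` monic, `deg b < deg a ≤ g` and
`a ∣ b² - f`. -/
theorem mumford_representation (g : ℕ) (hg : 1 ≤ g) (f : ℚ[X]) (hmonic : f.Monic)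
    (hdeg : f.natDegree = 2 * g + 1) (hsf : Squarefree f) :
    ∀ J : Ideal (QAlg (ℚ[X]) f), IsInvIdeal J →
      ∃! p : ℚ[X] × ℚ[X],
        (p.1.Monic ∧ p.2.degree < p.1.degree ∧ p.1.natDegree ≤ g ∧ p.1 ∣ p.2 ^ 2 - f) ∧
          ClassEq J (Ideal.span {qι (ℚ[X]) f p.1, qY (ℚ[X]) f - qι (ℚ[X]) f p.2}) := by
  intro J hJ
  have hf0 : f ≠ 0 := hmonic.ne_zero
  have hodd : Odd f.natDegree := ⟨g, by omega⟩
  have hJbot : J ≠ ⊥ := by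
    rintro rfl
    obtain ⟨J', r, hr, hJJ⟩ := hJ
    rw [Ideal.bot_mul] at hJJ
    exact hr ((Ideal.span_singleton_eq_bot).mp hJJ.symm)
  obtain ⟨A, B, hA0, hABdvd, hceq0⟩ := Mumford.initial_form f hodd hf0 hJbot
  obtain ⟨a₁, b₁, hm₁, hd₁, hv₁, hn₁, hI₁⟩ := Mumford.Idl_normalize f hA0 hABdvd
  have hceq1 : ClassEq J (Mumford.Idl f a₁ b₁) := by rw [hI₁]; exact hceq0
  obtain ⟨a, b, hma, hba, hag, hdv, hce2⟩ :=
    Mumford.reduce f hg hdeg hmonic hodd hsf a₁.natDegree a₁ b₁ le_rfl hm₁ hd₁ hv₁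
  have hce : ClassEq J (Mumford.Idl f a b) :=
    Mumford.ClassEq_trans f hodd hf0 hceq1 hce2
  refine ⟨(a, b), ⟨⟨hma, hba, hag, hdv⟩, hce⟩, ?_⟩
  rintro ⟨a', b'⟩ ⟨⟨hm', hd', hg', hv'⟩, hce'⟩
  have hcc : ClassEq (Mumford.Idl f a' b') (Mumford.Idl f a b) :=
    Mumford.ClassEq_trans f hodd hf0 (Mumford.ClassEq_symm f hce') hce
  have hIeq := Mumford.Idl_eq_of_ClassEq f hdeg hf0 hodd hm'.ne_zero hma.ne_zero
    hg' hag hv' hdv hcc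
  obtain ⟨e1, e2⟩ := Mumford.pair_eq_of_Idl_eq f hm' hma hd' hba hv' hdv hIeq
  exact Prod.ext e1 e2
end
end

section
/- Let D be an integer which is not a square, so that ℤ[√D] = ℤ[Y]/(Y² − D) is a non-degenerate quadratic ℤ-algebra. Then for every nonzero ideal I of ℤ[√D] there exist integers q, a, b with a dividing b² − D such that I = (q)·(a, √D − b), and the absolute norm of I satisfies Norm(I) = #(ℤ[√D]/I) = |q²a|. -/
open Ideal

section Aux

/-- The obvious additive equivalence `ℤ√D ≃+ (Fin 2 → ℤ)`. -/
def zsqrtdAddEquiv (D : ℤ) : Zsqrtd D ≃+ (Fin 2 → ℤ) where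
  toFun z := ![z.re, z.im]
  invFun f := ⟨f 0, f 1⟩
  left_inv z := by ext <;> rfl
  right_inv f := by funext i; fin_cases i <;> rfl
  map_add' x y := by funext i; fin_cases i <;> simp [Zsqrtd.re_add, Zsqrtd.im_add]

/-- The basis `1, √D` of `ℤ√D`. -/
noncomputable def zsqrtdBasis (D : ℤ) : Module.Basis (Fin 2) ℤ (Zsqrtd D) :=
  Module.Basis.ofEquivFun (zsqrtdAddEquiv D).toIntLinearEquiv

@[simp] lemma zsqrtdBasis_repr (D : ℤ) (z : Zsqrtd D) (i : Fin 2) :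
    (zsqrtdBasis D).repr z i = ![z.re, z.im] i := by
  simp [zsqrtdBasis, Module.Basis.ofEquivFun_repr_apply]
  rfl

/-- Determinant formula for `Nat.card (S ⧸ I)`, adapted from
`Ideal.natAbs_det_equiv` without the Dedekind hypothesis. -/
theorem natAbs_det_equiv' {S : Type*} [CommRing S] [IsDomain S] [Module.Free ℤ S]
    [Module.Finite ℤ S] (I : Ideal S) (hI : I ≠ ⊥) {E : Type*} [EquivLike E S I]
    [AddEquivClass E S I] (e : E) :
    Int.natAbs
        (LinearMap.det
          ((Submodule.subtype I).restrictScalars ℤ ∘ₗ AddMonoidHom.toIntLinearMap (e : S →+ I))) =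
      Nat.card (S ⧸ I) := by
  let ι := Module.Free.ChooseBasisIndex ℤ S
  let b := Module.Free.chooseBasis ℤ S
  cases isEmpty_or_nonempty ι
  · exact (not_nontrivial_iff_subsingleton.mpr
      (Function.Surjective.subsingleton b.repr.toEquiv.symm.surjective) (by infer_instance)).elim
  letI := Classical.decEq ι
  let a := I.smithCoeffs b hI
  let b' := I.ringBasis b hI
  let ab := I.selfBasis b hI
  have ab_eq := I.selfBasis_def b hI
  let e' : S ≃ₗ[ℤ] I := b'.equiv ab (Equiv.refl _)
  let f : S →ₗ[ℤ] S := (I.subtype.restrictScalars ℤ).comp (e' : S →ₗ[ℤ] I)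
  let f_apply : ∀ x, f x = b'.equiv ab (Equiv.refl _) x := fun x => rfl
  suffices (LinearMap.det f).natAbs = Nat.card (S ⧸ I) by
    calc
      _ = (LinearMap.det ((Submodule.subtype I).restrictScalars ℤ ∘ₗ
            (AddEquiv.toIntLinearEquiv e : S ≃ₗ[ℤ] I))).natAbs := rfl
      _ = (LinearMap.det ((Submodule.subtype I).restrictScalars ℤ ∘ₗ _)).natAbs :=
            Int.natAbs_eq_iff_associated.mpr (LinearMap.associated_det_comp_equiv _ _ _)
      _ = Nat.card (S ⧸ I) := this
  have ha : ∀ i, f (b' i) = a i • b' i := by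
    intro i; rw [f_apply, b'.equiv_apply, Equiv.refl_apply, ab_eq]
  calc
    Int.natAbs (LinearMap.det f) = Int.natAbs (LinearMap.toMatrix b' b' f).det := by
      rw [LinearMap.det_toMatrix]
    _ = Int.natAbs (Matrix.diagonal a).det := ?_
    _ = Int.natAbs (∏ i, a i) := by rw [Matrix.det_diagonal]
    _ = ∏ i, Int.natAbs (a i) := map_prod Int.natAbsHom a Finset.univ
    _ = Nat.card (S ⧸ I) := ?_
  · congr 2; ext i j
    rw [LinearMap.toMatrix_apply, ha, LinearEquiv.map_smul, Module.Basis.repr_self, Finsupp.smul_single,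
      smul_eq_mul, mul_one]
    by_cases h : i = j
    · rw [h, Matrix.diagonal_apply_eq, Finsupp.single_eq_same]
    · rw [Matrix.diagonal_apply_ne _ h, Finsupp.single_eq_of_ne' (Ne.symm h)]
  · haveI : ∀ i, NeZero (a i).natAbs := fun i =>
      ⟨Int.natAbs_ne_zero.mpr (Ideal.smithCoeffs_ne_zero b I hI i)⟩
    simp_rw [Nat.card_congr (Ideal.quotientEquivPiZMod I b hI).toEquiv, Nat.card_pi,
      Nat.card_zmod]
    rfl

theorem natAbs_det_basis_change' {S : Type*} [CommRing S] [IsDomain S] [Module.Free ℤ S]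
    [Module.Finite ℤ S] {ι : Type*} [Fintype ι] [DecidableEq ι] (b : Module.Basis ι ℤ S)
    (I : Ideal S) (hI : I ≠ ⊥) (bI : Module.Basis ι ℤ I) :
    (b.det ((↑) ∘ bI)).natAbs = Nat.card (S ⧸ I) := by
  let e := b.equiv bI (Equiv.refl _)
  calc
    (b.det ((Submodule.subtype I).restrictScalars ℤ ∘ bI)).natAbs =
        (LinearMap.det ((Submodule.subtype I).restrictScalars ℤ ∘ₗ (e : S →ₗ[ℤ] I))).natAbs := by
      rw [Module.Basis.det_comp_basis]
    _ = _ := natAbs_det_equiv' I hI e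

end Aux


section Main

lemma zsqrtd_norm_ne_zero {D : ℤ} (hD : ¬ IsSquare D) {z : Zsqrtd D} (hz : z ≠ 0) :
    Zsqrtd.norm z ≠ 0 := by
  rw [Ne, Zsqrtd.norm_eq_zero (fun n hn => hD ⟨n, hn⟩)]
  exact hz

lemma zsqrtd_isDomain {D : ℤ} (hD : ¬ IsSquare D) : IsDomain (Zsqrtd D) := by
  have : NoZeroDivisors (Zsqrtd D) := by
    constructor
    intro a b hab
    by_contra h
    push_neg at h
    have := zsqrtd_norm_ne_zero hD h.1
    have := zsqrtd_norm_ne_zero hD h.2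
    have hn : Zsqrtd.norm a * Zsqrtd.norm b = 0 := by
      rw [← Zsqrtd.norm_mul, hab, Zsqrtd.norm_zero]
    rcases mul_eq_zero.mp hn with h' | h' <;> simp_all
  exact NoZeroDivisors.to_isDomain _

/-- Let `D` be a non-square integer.  For every nonzero ideal `I` of
`ℤ[√D]` there are integers `q, a, b` with `a ∣ b² - D` such that
`I = (q)·(a, √D - b)`, and `Norm(I) = #(ℤ[√D]/I) = |q²a|`. -/
theorem ideal_normal_form_and_norm (D : ℤ) (hD : ¬ IsSquare D)
    (I : Ideal (Zsqrtd D)) (hI : I ≠ ⊥) :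
    ∃ q a b : ℤ, a ∣ b ^ 2 - D ∧
      I = Ideal.span {(q : Zsqrtd D)} *
        Ideal.span {(a : Zsqrtd D), Zsqrtd.sqrtd - (b : Zsqrtd D)} ∧
      Nat.card (Zsqrtd D ⧸ I) = (q ^ 2 * a).natAbs := by
  classical
  haveI := zsqrtd_isDomain hD
  -- the ideal of second coordinates
  let J : Ideal ℤ :=
  { carrier := {y | ∃ x, (⟨x, y⟩ : Zsqrtd D) ∈ I}
    add_mem' := by
      rintro u v ⟨x, hx⟩ ⟨x', hx'⟩
      refine ⟨x + x', ?_⟩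
      have := I.add_mem hx hx'
      convert this using 2 <;> simp [Zsqrtd.ext_iff]
    zero_mem' := ⟨0, by convert I.zero_mem using 2 <;> simp [Zsqrtd.ext_iff]⟩
    smul_mem' := by
      rintro r y ⟨x, hx⟩
      exact ⟨r * x, by
        have := I.mul_mem_left (r : Zsqrtd D) hx
        rwa [Zsqrtd.smul_val] at this⟩ }
  have memJ : ∀ y : ℤ, y ∈ J ↔ ∃ x, (⟨x, y⟩ : Zsqrtd D) ∈ I := fun y => Iff.rfl
  -- the ideal of integers in I
  let M : Ideal ℤ := I.comap (Int.castRingHom (Zsqrtd D))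
  have memM : ∀ x : ℤ, x ∈ M ↔ ((x : ℤ) : Zsqrtd D) ∈ I := fun x => Iff.rfl
  have coe_val : ∀ x : ℤ, ((x : ℤ) : Zsqrtd D) = (⟨x, 0⟩ : Zsqrtd D) := by
    intro x; ext <;> simp
  obtain ⟨g, hJ⟩ := Submodule.IsPrincipal.principal J
  obtain ⟨m, hM⟩ := Submodule.IsPrincipal.principal M
  replace hJ : J = Ideal.span {g} := hJ
  replace hM : M = Ideal.span {m} := hM
  -- m ≠ 0
  obtain ⟨z, hzI, hz0⟩ := Submodule.exists_mem_ne_zero_of_ne_bot hI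
  have hnormM : Zsqrtd.norm z ∈ M := by
    rw [memM, Zsqrtd.norm_eq_mul_conj]
    exact I.mul_mem_right _ hzI
  have hm0 : m ≠ 0 := by
    rintro rfl
    rw [hM, Ideal.span_singleton_eq_bot.mpr rfl, Submodule.mem_bot] at hnormM
    exact zsqrtd_norm_ne_zero hD hz0 hnormM
  -- g ∣ m and hence g ≠ 0
  have hmI : ((m : ℤ) : Zsqrtd D) ∈ I := by
    rw [← memM m, hM]; exact Ideal.mem_span_singleton_self m
  have hmJ : m ∈ J := by
    rw [memJ]
    refine ⟨0, ?_⟩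
    have := I.mul_mem_right Zsqrtd.sqrtd hmI
    convert this using 1
    ext <;> simp [Zsqrtd.re_mul, Zsqrtd.im_mul]
  have hgm : g ∣ m := by rwa [hJ, Ideal.mem_span_singleton] at hmJ
  have hg0 : g ≠ 0 := fun h => hm0 (by simpa [h] using hgm)
  -- pick c with ⟨c, g⟩ ∈ I
  have hgJ : g ∈ J := by rw [hJ]; exact Ideal.mem_span_singleton_self g
  obtain ⟨c, hcI⟩ := (memJ g).mp hgJ
  have hcJ : c ∈ J := by
    rw [memJ]
    refine ⟨D * g, ?_⟩
    have := I.mul_mem_right Zsqrtd.sqrtd hcI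
    convert this using 1
    ext <;> simp [Zsqrtd.re_mul, Zsqrtd.im_mul]
  have hgc : g ∣ c := by rwa [hJ, Ideal.mem_span_singleton] at hcJ
  -- the data
  set a : ℤ := m / g with ha_def
  set b : ℤ := -(c / g) with hb_def
  have hma : m = g * a := (Int.mul_ediv_cancel' hgm).symm
  have hcb : c = -(g * b) := by
    rw [hb_def, mul_neg, neg_neg, Int.mul_ediv_cancel' hgc]
  have ha0 : a ≠ 0 := fun h => hm0 (by simp [hma, h])
  -- key elements of I
  have hu : ((m : ℤ) : Zsqrtd D) ∈ I := hmI
  have hv : (⟨-(g * b), g⟩ : Zsqrtd D) ∈ I := by rwa [← hcb]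
  -- a ∣ b ^ 2 - D
  have hdvd : a ∣ b ^ 2 - D := by
    have hw : (⟨g * (D - b ^ 2), 0⟩ : Zsqrtd D) ∈ I := by
      have := I.mul_mem_right (⟨b, 1⟩ : Zsqrtd D) hv
      convert this using 1
      ext <;> simp [Zsqrtd.re_mul, Zsqrtd.im_mul] <;> ring
    have : g * (D - b ^ 2) ∈ M := by
      rw [memM, coe_val]; exact hw
    rw [hM, Ideal.mem_span_singleton, hma] at this
    have := (mul_dvd_mul_iff_left hg0).mp this
    exact (dvd_sub_comm).mp this
  -- decomposition of arbitrary elements of I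
  have key : ∀ w : Zsqrtd D, w ∈ I → ∃ j k : ℤ,
      (j : Zsqrtd D) * ((m : ℤ) : Zsqrtd D) + (k : Zsqrtd D) * (⟨c, g⟩ : Zsqrtd D) = w := by
    intro w hw
    have hwimJ : w.im ∈ J := (memJ w.im).mpr ⟨w.re, by convert hw⟩
    rw [hJ, Ideal.mem_span_singleton] at hwimJ
    obtain ⟨k, hk⟩ := hwimJ
    have hw' : (⟨w.re - k * c, 0⟩ : Zsqrtd D) ∈ I := by
      have := I.sub_mem hw (I.mul_mem_left (k : Zsqrtd D) hcI)
      convert this using 1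
      rw [Zsqrtd.smul_val]
      ext <;> simp [hk] <;> ring
    have : w.re - k * c ∈ M := by rw [memM, coe_val]; exact hw'
    rw [hM, Ideal.mem_span_singleton] at this
    obtain ⟨j, hj⟩ := this
    refine ⟨j, k, ?_⟩
    have h1 : (j : Zsqrtd D) * ((m : ℤ) : Zsqrtd D) = (⟨j * m, 0⟩ : Zsqrtd D) := by
      rw [coe_val m, Zsqrtd.smul_val]; ext <;> simp
    have h2 : (k : Zsqrtd D) * (⟨c, g⟩ : Zsqrtd D) = (⟨k * c, k * g⟩ : Zsqrtd D) :=
      Zsqrtd.smul_val _ _ _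
    have hw'' : w = (⟨j * m + k * c, k * g⟩ : Zsqrtd D) := by
      ext
      · show w.re = j * m + k * c
        rw [mul_comm j m]; omega
      · show w.im = k * g
        rw [mul_comm k g]; omega
    rw [h1, h2, hw'']
    ext <;> simp
  -- ideal equality
  have hideal : I = Ideal.span {(g : Zsqrtd D)} *
      Ideal.span {(a : Zsqrtd D), Zsqrtd.sqrtd - (b : Zsqrtd D)} := by
    have hrhs : Ideal.span {(g : Zsqrtd D)} *
        Ideal.span {(a : Zsqrtd D), Zsqrtd.sqrtd - (b : Zsqrtd D)} =
        Ideal.span {(g : Zsqrtd D) * (a : Zsqrtd D),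
          (g : Zsqrtd D) * (Zsqrtd.sqrtd - (b : Zsqrtd D))} := by
      rw [Ideal.span_insert, Ideal.mul_sup, Ideal.span_singleton_mul_span_singleton,
        Ideal.span_singleton_mul_span_singleton, ← Ideal.span_insert]
    have hu' : (g : Zsqrtd D) * (a : Zsqrtd D) = ((m : ℤ) : Zsqrtd D) := by
      rw [← Int.cast_mul, hma]
    have hv' : (g : Zsqrtd D) * (Zsqrtd.sqrtd - (b : Zsqrtd D)) =
        (⟨-(g * b), g⟩ : Zsqrtd D) := by
      ext <;> simp [Zsqrtd.re_mul, Zsqrtd.im_mul, Zsqrtd.re_sub, Zsqrtd.im_sub] <;> ring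
    rw [hrhs, hu', hv']
    apply le_antisymm
    · intro z hz
      rw [Ideal.mem_span_pair]
      obtain ⟨j, k, hjk⟩ := key z hz
      refine ⟨(j : Zsqrtd D), (k : Zsqrtd D), ?_⟩
      rw [← hcb]
      exact hjk
    · rw [Ideal.span_le]
      rintro w (rfl | rfl)
      · exact hu
      · exact hv
  -- the norm computation
  haveI : Module.Free ℤ (Zsqrtd D) := Module.Free.of_basis (zsqrtdBasis D)
  haveI : Module.Finite ℤ (Zsqrtd D) := Module.Finite.of_basis (zsqrtdBasis D)
  let uI : I := ⟨((m : ℤ) : Zsqrtd D), hu⟩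
  let vI : I := ⟨(⟨c, g⟩ : Zsqrtd D), hcI⟩
  have hli : LinearIndependent ℤ ![uI, vI] := by
    rw [LinearIndependent.pair_iff]
    intro s t hst
    have hcoe := congrArg (fun w : I => (w : Zsqrtd D)) hst
    have him : s * 0 + t * g = 0 := by
      have := congrArg Zsqrtd.im hcoe
      simpa [uI, vI, coe_val] using this
    have hre : s * m + t * c = 0 := by
      have := congrArg Zsqrtd.re hcoe
      simpa [uI, vI, coe_val] using this
    have ht : t = 0 := by
      rcases mul_eq_zero.mp (by linarith : t * g = 0) with h' | h'
      · exact h'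
      · exact absurd h' hg0
    have hs : s = 0 := by
      rw [ht, zero_mul, add_zero] at hre
      rcases mul_eq_zero.mp hre with h' | h'
      · exact h'
      · exact absurd h' hm0
    exact ⟨hs, ht⟩
  have hsp : ⊤ ≤ Submodule.span ℤ (Set.range ![uI, vI]) := by
    rintro ⟨w, hw⟩ -
    have hrange : Set.range ![uI, vI] = {uI, vI} := by
      simp [Matrix.range_cons, Matrix.range_empty, Set.pair_comm]
    rw [hrange, Submodule.mem_span_pair]
    obtain ⟨j, k, hjk⟩ := key w hw
    refine ⟨j, k, Subtype.ext ?_⟩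
    have : (↑(j • uI + k • vI) : Zsqrtd D) =
        (j : Zsqrtd D) * ((m : ℤ) : Zsqrtd D) + (k : Zsqrtd D) * (⟨c, g⟩ : Zsqrtd D) := by
      rw [show ((j • uI + k • vI : I) : Zsqrtd D)
          = j • (uI : Zsqrtd D) + k • (vI : Zsqrtd D) from rfl,
        zsmul_eq_mul, zsmul_eq_mul]
    rw [this, hjk]
  let bI : Module.Basis (Fin 2) ℤ I := Module.Basis.mk hli hsp
  have hcard := natAbs_det_basis_change' (zsqrtdBasis D) I hI bI
  rw [Module.Basis.det_apply] at hcard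
  have hmat : (zsqrtdBasis D).toMatrix ((↑) ∘ bI) = !![m, c; 0, g] := by
    ext i j
    fin_cases i <;> fin_cases j <;>
      simp [Module.Basis.toMatrix_apply, bI, Module.Basis.mk_apply, zsqrtdBasis_repr, uI, vI, coe_val]
  rw [hmat, Matrix.det_fin_two_of] at hcard
  refine ⟨g, a, b, hdvd, hideal, ?_⟩
  rw [← hcard]
  congr 1
  rw [hma]
  ring

end Main
end

section
/- Let D be an integer which is not a square. If a₁, a₂, b are integers with gcd(a₁, a₂) = 1 and a₁a₂ dividing b² − D, then in ℤ[√D] one has the ideal identity (a₁, √D − b)·(a₂, √D − b) = (a₁a₂, √D − b). -/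
lemma sqrtd_sq' (D : ℤ) : (Zsqrtd.sqrtd : Zsqrtd D) * Zsqrtd.sqrtd = (D : Zsqrtd D) := by
  ext <;> simp [Zsqrtd.re_mul, Zsqrtd.im_mul]

/-- Let `D` be a non-square integer.  If `a₁, a₂, b` are integers with
`gcd(a₁, a₂) = 1` and `a₁a₂ ∣ b² - D`, then in `ℤ[√D]` one has
`(a₁, √D - b)·(a₂, √D - b) = (a₁a₂, √D - b)`. -/
theorem ideal_product_coprime (D : ℤ) (hD : ¬ IsSquare D) (a₁ a₂ b : ℤ)
    (hcop : Int.gcd a₁ a₂ = 1) (hdvd : a₁ * a₂ ∣ b ^ 2 - D) :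
    Ideal.span {(a₁ : Zsqrtd D), Zsqrtd.sqrtd - (b : Zsqrtd D)} *
      Ideal.span {(a₂ : Zsqrtd D), Zsqrtd.sqrtd - (b : Zsqrtd D)} =
      Ideal.span {((a₁ * a₂ : ℤ) : Zsqrtd D), Zsqrtd.sqrtd - (b : Zsqrtd D)} := by
  set y : Zsqrtd D := Zsqrtd.sqrtd - (b : Zsqrtd D) with hy
  obtain ⟨c, hc⟩ := hdvd
  have hysq : y * y = (-(2 * b)) * y + ((a₁ : Zsqrtd D) * a₂) * (-c) := by
    have h1 : ((b ^ 2 - D : ℤ) : Zsqrtd D) = ((a₁ * a₂ * c : ℤ) : Zsqrtd D) := by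
      rw [hc]
    push_cast at h1
    have h2 := sqrtd_sq' D
    have hD' : (D : Zsqrtd D) = (b : Zsqrtd D) ^ 2 - (a₁ : Zsqrtd D) * a₂ * c := by
      linear_combination -h1
    rw [hy]
    linear_combination h2 - h1
  apply le_antisymm
  · rw [Ideal.mul_le]
    intro r hr s hs
    rw [Ideal.mem_span_pair] at hr hs ⊢
    obtain ⟨p, q, rfl⟩ := hr
    obtain ⟨p', q', rfl⟩ := hs
    refine ⟨p * p' + q * q' * (-c), p * q' * a₁ + q * p' * a₂ + q * q' * (-(2*b)), ?_⟩
    push_cast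
    linear_combination (-(q * q')) * hysq
  · rw [Ideal.span_le]
    rintro z (rfl | rfl)
    · push_cast
      exact Ideal.mul_mem_mul (Ideal.subset_span (Or.inl rfl))
        (Ideal.subset_span (Or.inl rfl))
    · obtain ⟨u, v, huv⟩ := Int.isCoprime_iff_gcd_eq_one.mpr hcop
      have m1 : (a₁ : Zsqrtd D) ∈ Ideal.span {(a₁ : Zsqrtd D), y} :=
        Ideal.subset_span (Set.mem_insert _ _)
      have m2 : (a₂ : Zsqrtd D) ∈ Ideal.span {(a₂ : Zsqrtd D), y} :=
        Ideal.subset_span (Set.mem_insert _ _)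
      have m1y : y ∈ Ideal.span {(a₁ : Zsqrtd D), y} :=
        Ideal.subset_span (Set.mem_insert_of_mem _ rfl)
      have m2y : y ∈ Ideal.span {(a₂ : Zsqrtd D), y} :=
        Ideal.subset_span (Set.mem_insert_of_mem _ rfl)
      have h1 := Ideal.mul_mem_mul m1 m2y
      have h2 := Ideal.mul_mem_mul m1y m2
      have hz : y = (u : Zsqrtd D) * ((a₁ : Zsqrtd D) * y) + (v : Zsqrtd D) * (y * (a₂ : Zsqrtd D)) := by
        have h1' : ((u * a₁ + v * a₂ : ℤ) : Zsqrtd D) = 1 := by rw [huv]; norm_cast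
        push_cast at h1'
        linear_combination (-y) * h1'
      have hmem := Ideal.add_mem _ (Ideal.mul_mem_left _ ((u : Zsqrtd D)) h1)
        (Ideal.mul_mem_left _ ((v : Zsqrtd D)) h2)
      rwa [← hz] at hmem
end

section
/- Let f ∈ ℤ[X] be a monic polynomial of odd degree 2g+1 with g ≥ 1. Let Λ ⊆ ℤ and, for each n ∈ Λ, let a(n), b(n), c(n) be integers with b(n)² − a(n)c(n) = f(n). Suppose there exist a non-constant polynomial h ∈ ℚ[X] with deg h < deg f and an integer M ≥ 1 such that |h(n)|/M ≤ |a(n)| ≤ |h(n)| for all n ∈ Λ. Then there exists n₀ ∈ ℤ such that for every n ∈ Λ with n ≤ n₀, the quadratic form [a(n), 2b(n), c(n)] is not equivalent to the identity form [1, 0, −f(n)]: there exist no integers α, β, γ, δ with αδ − βγ = ±1 and no sign ε ∈ {1, −1} such that X² − f(n)Y² = ε·( a(n)(αX+βY)² + 2b(n)(αX+βY)(γX+δY) + c(n)(γX+δY)² ) holds identically in X, Y. -/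
open Polynomial Filter

lemma eval_comp_negX (p : ℚ[X]) (x : ℚ) : (p.comp (-X)).eval x = p.eval (-x) := by
  simp [eval_comp]

lemma natDegree_comp_negX (p : ℚ[X]) : (p.comp (-X)).natDegree = p.natDegree := by
  simp [natDegree_comp]

lemma tendsto_eval_atBot_atBot (p : ℚ[X]) (hd : 0 < p.natDegree)
    (hodd : Odd p.natDegree) (hlc : 0 ≤ p.leadingCoeff) :
    Tendsto (fun x : ℚ => p.eval x) atBot atBot := by
  have hq : (p.comp (-X)).leadingCoeff ≤ 0 := by
    rw [leadingCoeff_comp (by simp)]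
    simp only [leadingCoeff_neg, leadingCoeff_X]
    rw [hodd.neg_one_pow]
    nlinarith
  have hdq : 0 < (p.comp (-X)).degree := by
    rw [← natDegree_pos_iff_degree_pos, natDegree_comp_negX]; exact hd
  have h1 := tendsto_atBot_of_leadingCoeff_nonpos (p.comp (-X)) hdq hq
  have h2 : Tendsto (fun x : ℚ => -x) atBot atTop := tendsto_neg_atBot_atTop
  have := h1.comp h2
  simpa [Function.comp_def, eval_comp_negX] using this

lemma tendsto_eval_atBot_atTop (p : ℚ[X]) (hd : 0 < p.natDegree)
    (heven : Even p.natDegree) (hlc : 0 ≤ p.leadingCoeff) :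
    Tendsto (fun x : ℚ => p.eval x) atBot atTop := by
  have hq : 0 ≤ (p.comp (-X)).leadingCoeff := by
    rw [leadingCoeff_comp (by simp)]
    simp only [leadingCoeff_neg, leadingCoeff_X]
    rw [heven.neg_one_pow]
    nlinarith
  have hdq : 0 < (p.comp (-X)).degree := by
    rw [← natDegree_pos_iff_degree_pos, natDegree_comp_negX]; exact hd
  have h1 := tendsto_atTop_of_leadingCoeff_nonneg (p.comp (-X)) hdq hq
  have := h1.comp (tendsto_neg_atBot_atTop : Tendsto (fun x : ℚ => -x) atBot atTop)
  simpa [Function.comp_def, eval_comp_negX] using this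


lemma aux_gamma_zero (A e α : ℤ) (hA : 1 < |A|) (he : e = 1 ∨ e = -1)
    (key : A * e = (A * α) ^ 2) : False := by
  have hane : A ≠ 0 := by
    intro h0; rw [h0, abs_zero] at hA; exact absurd hA (by norm_num)
  have hα0 : α ≠ 0 := by
    rintro rfl
    have h0 : A * e = 0 := by linear_combination key
    have : A = 0 := by rcases he with rfl | rfl <;> linarith
    exact hane this
  have hα2 : 1 ≤ α ^ 2 := by nlinarith [Int.one_le_abs hα0, sq_abs α]
  rcases he with rfl | rfl <;>
    nlinarith [key, hα2, hA, sq_abs A, le_abs_self A, neg_abs_le A, abs_nonneg A, sq_nonneg A]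

lemma aux_gamma_ne (A B D e α γ : ℤ) (hD : D < 0) (hA : |A| < -D) (hγ : 1 ≤ γ ^ 2)
    (he : e = 1 ∨ e = -1) (key : A * e = (A * α + B * γ) ^ 2 - D * γ ^ 2) : False := by
  rcases he with rfl | rfl <;>
    nlinarith [key, sq_nonneg (A * α + B * γ), le_abs_self A, neg_abs_le A]

/-- Lemma 4.3, key lemma.  Let `f ∈ ℤ[X]` be monic of odd degree
`2g+1`, `g ≥ 1`.  Given a family of quadratic forms `[a(n), 2b(n), c(n)]` of discriminant
`4f(n)` indexed by `n ∈ Λ ⊆ ℤ`, such that `|h(n)|/M ≤ |a(n)| ≤ |h(n)|` on `Λ` for a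
nonconstant `h ∈ ℚ[X]` with `deg h < deg f` and some `M ≥ 1`, there is `n₀` such that for
all `n ∈ Λ` with `n ≤ n₀` the form `[a(n), 2b(n), c(n)]` is not equivalent to the identity
form `[1, 0, -f(n)]`. -/
theorem key_lemma_not_equivalent_to_identity (g : ℕ) (hg : 1 ≤ g) (f : ℤ[X])
    (hmonic : f.Monic) (hdeg : f.natDegree = 2 * g + 1)
    (Λ : Set ℤ) (a b c : ℤ → ℤ)
    (hdisc : ∀ n ∈ Λ, (b n) ^ 2 - (a n) * (c n) = f.eval n)
    (h : ℚ[X]) (hh : 1 ≤ h.natDegree) (hhf : h.natDegree < f.natDegree)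
    (M : ℤ) (hM : 1 ≤ M)
    (hlow : ∀ n ∈ Λ, |h.eval (n : ℚ)| ≤ (M : ℚ) * |(a n : ℚ)|)
    (hup : ∀ n ∈ Λ, |(a n : ℚ)| ≤ |h.eval (n : ℚ)|) :
    ∃ n₀ : ℤ, ∀ n ∈ Λ, n ≤ n₀ →
      ¬ ∃ α β γ δ ε : ℤ, (α * δ - β * γ = 1 ∨ α * δ - β * γ = -1) ∧
          (ε = 1 ∨ ε = -1) ∧
          ∀ x y : ℤ, x ^ 2 - f.eval n * y ^ 2 =
            ε * (a n * (α * x + β * y) ^ 2 +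
              2 * b n * (α * x + β * y) * (γ * x + δ * y) +
              c n * (γ * x + δ * y) ^ 2) := by
  set F : ℚ[X] := f.map (Int.castRingHom ℚ) with hF
  have hFmon : F.Monic := hmonic.map _
  have hFdeg : F.natDegree = f.natDegree := hmonic.natDegree_map _
  have hFeval : ∀ n : ℤ, F.eval (n : ℚ) = ((f.eval n : ℤ) : ℚ) := fun n => by
    simp [hF]
  have hFodd : Odd F.natDegree := by rw [hFdeg, hdeg]; exact ⟨g, by ring⟩
  have hFd : 0 < F.natDegree := by rw [hFdeg, hdeg]; omega
  have hF0 : F ≠ 0 := hFmon.ne_zero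
  have hdegh : h.degree < F.degree := degree_lt_degree (by rw [hFdeg]; exact hhf)
  have hdegnh : (-h).degree < F.degree := by rwa [degree_neg]
  -- polynomial F + h
  have hdFh : (F + h).degree = F.degree := by
    rw [add_comm]; exact degree_add_eq_right_of_degree_lt hdegh
  have hndFh : (F + h).natDegree = F.natDegree := natDegree_eq_of_degree_eq hdFh
  have hlcFh : (F + h).leadingCoeff = 1 := by
    rw [add_comm, leadingCoeff_add_of_degree_lt hdegh]; exact hFmon
  -- polynomial F - h
  have hdFh' : (F - h).degree = F.degree := by
    rw [sub_eq_add_neg, add_comm]; exact degree_add_eq_right_of_degree_lt hdegnh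
  have hndFh' : (F - h).natDegree = F.natDegree := natDegree_eq_of_degree_eq hdFh'
  have hlcFh' : (F - h).leadingCoeff = 1 := by
    rw [sub_eq_add_neg, add_comm, leadingCoeff_add_of_degree_lt hdegnh]; exact hFmon
  -- polynomial h^2 - C M^2
  have hhne : h ≠ 0 := fun h0 => by simp [h0] at hh
  have hndh2 : (h ^ 2).natDegree = 2 * h.natDegree := by
    rw [natDegree_pow]
  have hdC : (-(C ((M : ℚ) ^ 2))).degree < (h ^ 2).degree := by
    calc (-(C ((M : ℚ) ^ 2))).degree ≤ 0 := by rw [degree_neg]; exact degree_C_le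
    _ < (h ^ 2).degree := by
        rw [← natDegree_pos_iff_degree_pos, hndh2]; omega
  have hdh2 : (h ^ 2 - C ((M : ℚ) ^ 2)).degree = (h ^ 2).degree := by
    rw [sub_eq_add_neg]; exact degree_add_eq_left_of_degree_lt hdC
  have hndh2' : (h ^ 2 - C ((M : ℚ) ^ 2)).natDegree = 2 * h.natDegree :=
    (natDegree_eq_of_degree_eq hdh2).trans hndh2
  have hlch2 : (h ^ 2 - C ((M : ℚ) ^ 2)).leadingCoeff = h.leadingCoeff ^ 2 := by
    rw [sub_eq_add_neg, add_comm, leadingCoeff_add_of_degree_lt hdC, leadingCoeff_pow]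
  -- tendsto facts
  have t1 : Tendsto (fun x : ℚ => F.eval x) atBot atBot :=
    tendsto_eval_atBot_atBot F hFd hFodd (by rw [hFmon]; norm_num)
  have t2 : Tendsto (fun x : ℚ => (F + h).eval x) atBot atBot :=
    tendsto_eval_atBot_atBot _ (by rw [hndFh]; exact hFd) (by rw [hndFh]; exact hFodd)
      (by rw [hlcFh]; norm_num)
  have t3 : Tendsto (fun x : ℚ => (F - h).eval x) atBot atBot :=
    tendsto_eval_atBot_atBot _ (by rw [hndFh']; exact hFd) (by rw [hndFh']; exact hFodd)
      (by rw [hlcFh']; norm_num)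
  have t4 : Tendsto (fun x : ℚ => (h ^ 2 - C ((M : ℚ) ^ 2)).eval x) atBot atTop :=
    tendsto_eval_atBot_atTop _ (by rw [hndh2']; omega) (by rw [hndh2']; exact even_two_mul _)
      (by rw [hlch2]; positivity)
  have E : ∀ᶠ x : ℚ in atBot, F.eval x < 0 ∧ (F + h).eval x < 0 ∧ (F - h).eval x < 0 ∧
      0 < (h ^ 2 - C ((M : ℚ) ^ 2)).eval x := by
    filter_upwards [t1.eventually (eventually_lt_atBot 0),
      t2.eventually (eventually_lt_atBot 0), t3.eventually (eventually_lt_atBot 0),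
      t4.eventually (eventually_gt_atTop 0)] with x h1 h2 h3 h4
    exact ⟨h1, h2, h3, h4⟩
  have castT : Tendsto (fun n : ℤ => (n : ℚ)) atBot atBot :=
    tendsto_intCast_atBot_iff.2 tendsto_id
  have E' := castT.eventually E
  rw [eventually_atBot] at E'
  obtain ⟨n₀, hn₀⟩ := E'
  refine ⟨n₀, fun n hnΛ hn hex => ?_⟩
  obtain ⟨e1, e2, e3, e4⟩ := hn₀ n hn
  rw [eval_sub, eval_pow, eval_C] at e4
  rw [eval_add] at e2
  rw [eval_sub] at e3
  rw [hFeval n] at e1 e2 e3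
  -- key inequalities in ℚ
  have habs : |h.eval (n : ℚ)| < -((f.eval n : ℤ) : ℚ) := abs_lt.2 ⟨by linarith, by linarith⟩
  have hM' : (1 : ℚ) ≤ (M : ℚ) := by exact_mod_cast hM
  have hMlt : (M : ℚ) < |h.eval (n : ℚ)| := by
    nlinarith [sq_abs (h.eval (n : ℚ)), abs_nonneg (h.eval (n : ℚ))]
  have hA1 : (1 : ℚ) < |((a n : ℤ) : ℚ)| := by
    have := hlow n hnΛ
    nlinarith
  have hA2 : |((a n : ℤ) : ℚ)| < -((f.eval n : ℤ) : ℚ) := lt_of_le_of_lt (hup n hnΛ) habs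
  -- transfer to ℤ
  have hfneg : f.eval n < 0 := by exact_mod_cast e1
  have hA1' : 1 < |a n| := by exact_mod_cast hA1
  have hA2' : |a n| < -(f.eval n) := by exact_mod_cast hA2
  obtain ⟨α, β, γ, δ, ε, _, hε, hid⟩ := hex
  have hQ : ε * (a n * α ^ 2 + 2 * b n * α * γ + c n * γ ^ 2) = 1 := by
    linear_combination (-1 : ℤ) * hid 1 0
  have hQε : a n * α ^ 2 + 2 * b n * α * γ + c n * γ ^ 2 = ε := by
    rcases hε with rfl | rfl
    · linear_combination hQ
    · linear_combination -hQ
  have hd := hdisc n hnΛ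
  have key : a n * ε = (a n * α + b n * γ) ^ 2 - f.eval n * γ ^ 2 := by
    linear_combination (-(a n)) * hQε - γ ^ 2 * hd
  rcases eq_or_ne γ 0 with rfl | hγ
  · have key2 : a n * ε = (a n * α) ^ 2 := by linear_combination key
    exact aux_gamma_zero (a n) ε α hA1' hε key2
  · have hγ2 : 1 ≤ γ ^ 2 := by nlinarith [Int.one_le_abs hγ, sq_abs γ]
    exact aux_gamma_ne (a n) (b n) (f.eval n) ε α γ hfneg hA2' hγ2 hε key
end

section
/- Let D < 0 be an integer and let a, b, c be integers with b² − ac = D. If the quadratic form [a, 2b, c] is equivalent to the identity form [1, 0, −D], i.e. there exist integers α, β, γ, δ with αδ − βγ = ±1 and a sign ε ∈ {1, −1} such that X² − DY² = ε·( a(αX+βY)² + 2b(αX+βY)(γX+δY) + c(γX+δY)² ) identically, then |a| = 1 or |a| ≥ −D = |D|. -/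
/-- Let `D < 0` and `a, b, c ∈ ℤ` with `b² - ac = D`.  If the form
`[a, 2b, c]` is equivalent to the identity form `[1, 0, -D]`, then `|a| = 1` or
`|a| ≥ -D = |D|`. -/
theorem small_leading_coefficient_not_identity (D : ℤ) (hD : D < 0) (a b c : ℤ)
    (hdisc : b ^ 2 - a * c = D) (α β γ δ ε : ℤ)
    (hdet : α * δ - β * γ = 1 ∨ α * δ - β * γ = -1) (hε : ε = 1 ∨ ε = -1)
    (hid : ∀ x y : ℤ, x ^ 2 - D * y ^ 2 =
      ε * (a * (α * x + β * y) ^ 2 + 2 * b * (α * x + β * y) * (γ * x + δ * y) +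
        c * (γ * x + δ * y) ^ 2)) :
    |a| = 1 ∨ -D ≤ |a| := by
  have key : ε * a = δ ^ 2 - D * γ ^ 2 := by
    obtain hd | hd := hdet
    · have h := hid δ (-γ)
      have e1 : α * δ + β * (-γ) = 1 := by linarith
      have e2 : γ * δ + δ * (-γ) = 0 := by ring
      rw [e1, e2] at h
      linear_combination -h
    · have h := hid (-δ) γ
      have e1 : α * (-δ) + β * γ = 1 := by linarith
      have e2 : γ * (-δ) + δ * γ = 0 := by ring
      rw [e1, e2] at h
      linear_combination -h
  have habs : |a| = δ ^ 2 - D * γ ^ 2 := by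
    have hnn : 0 ≤ δ ^ 2 - D * γ ^ 2 := by nlinarith [sq_nonneg δ, sq_nonneg γ]
    obtain rfl | rfl := hε
    · rw [abs_of_nonneg (by linarith : (0:ℤ) ≤ a)]; linarith
    · rw [abs_of_nonpos (by linarith : a ≤ (0:ℤ))]; linarith
  by_cases hγ : γ = 0
  · left
    subst hγ
    obtain hd | hd := hdet
    · have hδ : δ = 1 ∨ δ = -1 := by
        have : IsUnit δ := IsUnit.of_mul_eq_one (a := δ) α (by linarith [mul_comm α δ])
        exact Int.isUnit_iff.mp this
      obtain rfl | rfl := hδ <;> simp [habs]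
    · have hδ : δ = 1 ∨ δ = -1 := by
        have : IsUnit δ := IsUnit.of_mul_eq_one (a := δ) (-α) (by linarith [mul_comm α δ])
        exact Int.isUnit_iff.mp this
      obtain rfl | rfl := hδ <;> simp [habs]
  · right
    have : 1 ≤ γ ^ 2 := by nlinarith [Int.one_le_abs hγ, sq_abs γ]
    nlinarith [sq_nonneg δ]
end

section
/- Let f ∈ ℤ[X] be a monic polynomial of odd degree, let A, B, C ∈ ℤ[X] and let e be a positive integer with B² − AC = e²f. If there exists an integer n with gcd(A(n), e) = 1, then cont(A) = 1, i.e. the gcd of the coefficients of A is 1. (Indeed, if a prime p divided cont(A), then p would not divide e, and B² ≡ e²f (mod p) would force the reduction of f modulo p to be a square in 𝔽_p[X], contradicting that it is monic of odd degree.) -/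
open Polynomial

/-- Let `f ∈ ℤ[X]` be monic of odd degree, `A, B, C ∈ ℤ[X]` and `e` a
positive integer with `B² - AC = e²f`.  If `gcd(A(n), e) = 1` for some integer `n`, then
`cont(A) = 1`. -/
theorem content_eq_one_of_coprime_eval (f A B C : ℤ[X]) (hmonic : f.Monic)
    (hodd : Odd f.natDegree) (e : ℤ) (he : 0 < e)
    (hABC : B ^ 2 - A * C = Polynomial.C (e ^ 2) * f)
    (n : ℤ) (hcop : Int.gcd (A.eval n) e = 1) :
    A.content = 1 := by
  by_contra h
  -- find a prime p dividing the content
  have hnorm : normalize A.content = A.content := A.normalize_content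
  have hnonneg : 0 ≤ A.content := by
    by_contra hneg
    push_neg at hneg
    rw [Int.normalize_of_nonpos hneg.le] at hnorm
    omega
  have hna : A.content.natAbs ≠ 1 := by
    intro h1
    apply h
    omega
  obtain ⟨p, hp, hpd⟩ := Nat.exists_prime_and_dvd hna
  have hpc : (p : ℤ) ∣ A.content := Int.dvd_natAbs.mp (Int.natCast_dvd_natCast.mpr hpd)
  -- p divides every coefficient of A, hence A.eval n
  have hpeval : (p : ℤ) ∣ A.eval n := by
    obtain ⟨q, hq⟩ := A.C_content_dvd
    have : A.eval n = A.content * q.eval n := by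
      conv_lhs => rw [hq]
      rw [eval_mul, eval_C]
    rw [this]
    exact hpc.mul_right _
  -- p does not divide e
  have hpe : ¬ (p : ℤ) ∣ e := by
    intro hdvd
    have : (p : ℤ) ∣ (Int.gcd (A.eval n) e : ℤ) := Int.dvd_coe_gcd hpeval hdvd
    rw [hcop] at this
    exact hp.one_lt.ne' (by exact_mod_cast Int.eq_one_of_dvd_one (by positivity) this)
  haveI : Fact p.Prime := ⟨hp⟩
  set φ := Int.castRingHom (ZMod p)
  -- A maps to 0 mod p
  have hA0 : A.map φ = 0 := by
    ext k
    simp only [coeff_map, coeff_zero, φ, eq_intCast]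
    rw [ZMod.intCast_zmod_eq_zero_iff_dvd]
    exact dvd_trans hpc (A.content_dvd_coeff k)
  have hmap := congrArg (Polynomial.map φ) hABC
  simp only [Polynomial.map_sub, Polynomial.map_pow, Polynomial.map_mul, Polynomial.map_C,
    hA0, zero_mul, mul_zero, sub_zero] at hmap
  -- ē ≠ 0
  have hebar : (φ e) ≠ 0 := by
    simp only [φ, eq_intCast]
    rw [Ne, ZMod.intCast_zmod_eq_zero_iff_dvd]
    exact hpe
  have hfm : (f.map φ).Monic := hmonic.map φ
  have hC : Polynomial.C (φ (e ^ 2)) ≠ 0 := by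
    rw [Ne, C_eq_zero, map_pow, pow_eq_zero_iff (by norm_num : (2:ℕ) ≠ 0)]
    exact hebar
  have hrhs : (Polynomial.C (φ (e ^ 2)) * f.map φ).natDegree = f.natDegree := by
    rw [natDegree_C_mul (fun hc => hC (by rw [hc, map_zero])), hmonic.natDegree_map]
  have hBne : B.map φ ≠ 0 := by
    intro hB
    rw [hB] at hmap
    exact (mul_ne_zero hC hfm.ne_zero) (by simpa using hmap.symm)
  have hdeg : 2 * (B.map φ).natDegree = f.natDegree := by
    rw [← hrhs, ← hmap, natDegree_pow, mul_comm]
  rw [← hdeg] at hodd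
  exact Nat.not_odd_iff_even.mpr ⟨_, (two_mul _)⟩ hodd
end
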